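/- arXiv:2204.08616 — 12 statements merged into one kernel-verified Lean document; each statement's English description precedes it below -/
import Mathlib

section
/- Let F : ℝⁿ → ℝᵐ be continuously differentiable. Then θ(x) ≤ 0 for every x ∈ ℝⁿ, and x is Pareto critical if and only if θ(x) = 0. -/
open scoped RealInnerProductSpace

/-- `φ_g(d) = max_{1 ≤ i ≤ m} ⟨g_i, d⟩ + ‖d‖²/2`. -/
noncomputable def phi {n m : ℕ} (g : Fin m → EuclideanSpace ℝ (Fin n))
    (d : EuclideanSpace ℝ (Fin n)) : ℝ :=
  (⨆ i, ⟪g i, d⟫) + ‖d‖ ^ 2 / 2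

/-- `x` is Pareto critical: no direction `d` with `⟨∇F_i(x), d⟩ < 0` for all `i`. -/
def ParetoCritical {n m : ℕ} (F : Fin m → EuclideanSpace ℝ (Fin n) → ℝ)
    (x : EuclideanSpace ℝ (Fin n)) : Prop :=
  ¬ ∃ d : EuclideanSpace ℝ (Fin n), ∀ i, ⟪gradient (F i) x, d⟫ < 0

/-- `θ(x) = min_d [max_i ⟨∇F_i(x), d⟩ + ‖d‖²/2]`. -/
noncomputable def theta {n m : ℕ} (F : Fin m → EuclideanSpace ℝ (Fin n) → ℝ)
    (x : EuclideanSpace ℝ (Fin n)) : ℝ :=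
  ⨅ d : EuclideanSpace ℝ (Fin n), phi (fun i => gradient (F i) x) d

theorem stmt_1 {n m : ℕ} (hm : 0 < m) (F : Fin m → EuclideanSpace ℝ (Fin n) → ℝ)
    (hF : ∀ i, ContDiff ℝ 1 (F i)) (x : EuclideanSpace ℝ (Fin n)) :
    theta F x ≤ 0 ∧ (ParetoCritical F x ↔ theta F x = 0) := by
  haveI : Nonempty (Fin m) := ⟨⟨0, hm⟩⟩
  set g : Fin m → EuclideanSpace ℝ (Fin n) := fun i => gradient (F i) x with hg
  have hBddA : ∀ d : EuclideanSpace ℝ (Fin n),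
      BddAbove (Set.range fun i => ⟪g i, d⟫) := fun d =>
    Set.Finite.bddAbove (Set.finite_range _)
  have hsup_ge : ∀ (d : EuclideanSpace ℝ (Fin n)) i, ⟪g i, d⟫ ≤ ⨆ j, ⟪g j, d⟫ :=
    fun d i => le_ciSup (hBddA d) i
  have hmax : ∀ d : EuclideanSpace ℝ (Fin n), ∃ i, (⨆ j, ⟪g j, d⟫) = ⟪g i, d⟫ := by
    intro d
    obtain ⟨i, hi⟩ := Finite.exists_max (fun i => ⟪g i, d⟫)
    exact ⟨i, le_antisymm (ciSup_le hi) (hsup_ge d i)⟩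
  have hbdd : BddBelow (Set.range (phi g)) := by
    refine ⟨-‖g ⟨0, hm⟩‖ ^ 2 / 2, ?_⟩
    rintro _ ⟨d, rfl⟩
    have h1 := hsup_ge d ⟨0, hm⟩
    have h2 : -(‖g ⟨0, hm⟩‖ * ‖d‖) ≤ ⟪g ⟨0, hm⟩, d⟫ :=
      neg_le_of_abs_le (abs_real_inner_le_norm _ _)
    unfold phi
    nlinarith [sq_nonneg (‖d‖ - ‖g ⟨0, hm⟩‖)]
  have htheta : theta F x = ⨅ d, phi g d := rfl
  have hphi0 : phi g 0 = 0 := by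
    unfold phi
    simp
  have hle : theta F x ≤ 0 := by
    have h := ciInf_le hbdd (0 : EuclideanSpace ℝ (Fin n))
    rw [hphi0] at h
    rw [htheta]; exact h
  refine ⟨hle, ?_, ?_⟩
  · -- ParetoCritical → theta = 0
    intro hpc
    unfold ParetoCritical at hpc
    push_neg at hpc
    refine le_antisymm hle ?_
    rw [htheta]
    refine le_ciInf fun d => ?_
    obtain ⟨i, hi⟩ := hpc d
    have h1 := hsup_ge d i
    unfold phi
    nlinarith [sq_nonneg (‖d‖ : ℝ)]
  · -- theta = 0 → ParetoCritical
    intro hθ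
    by_contra hnc
    unfold ParetoCritical at hnc
    rw [not_not] at hnc
    obtain ⟨d, hd⟩ := hnc
    have hd0 : d ≠ 0 := by
      intro h
      have := hd ⟨0, hm⟩
      rw [h] at this
      simp at this
    have hN : (0 : ℝ) < ‖d‖ := norm_pos_iff.mpr hd0
    set s : ℝ := ⨆ j, ⟪g j, d⟫ with hs_def
    obtain ⟨i, hi⟩ := hmax d
    have hs : s < 0 := by rw [hs_def, hi]; exact hd i
    set t : ℝ := -s / ‖d‖ ^ 2 with ht_def
    have ht : 0 < t := div_pos (neg_pos.mpr hs) (by positivity)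
    have hsup_t : (⨆ j, ⟪g j, t • d⟫) = t * s := by
      refine le_antisymm ?_ ?_
      · refine ciSup_le fun j => ?_
        rw [real_inner_smul_right]
        exact mul_le_mul_of_nonneg_left (hsup_ge d j) ht.le
      · have h2 : t * s = ⟪g i, t • d⟫ := by
          rw [real_inner_smul_right, hs_def, hi]
        rw [h2]
        exact hsup_ge (t • d) i
    have hnorm : ‖t • d‖ ^ 2 = t ^ 2 * ‖d‖ ^ 2 := by
      rw [norm_smul, mul_pow, Real.norm_eq_abs, sq_abs]
    have hval : phi g (t • d) = t * s + t ^ 2 * ‖d‖ ^ 2 / 2 := by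
      unfold phi
      rw [hsup_t, hnorm]
    have hlt : phi g (t • d) < 0 := by
      have hN2 : (0:ℝ) < ‖d‖ ^ 2 := by positivity
      have hsne : s ≠ 0 := ne_of_lt hs
      have heq : t * s + t ^ 2 * ‖d‖ ^ 2 / 2 = -(s ^ 2) / (2 * ‖d‖ ^ 2) := by
        rw [ht_def]; field_simp; ring
      rw [hval, heq]
      apply div_neg_of_neg_of_pos
      · have : 0 < s ^ 2 := by positivity
        linarith
      · positivity
    have := ciInf_le hbdd (t • d)
    rw [← htheta, hθ] at this
    linarith
end

section
/- Let F : ℝⁿ → ℝᵐ be continuously differentiable. Then x is Pareto critical if and only if d(x) = 0, where d(x) is the steepest descent direction at x. -/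
open scoped RealInnerProductSpace

theorem stmt_2 {n m : ℕ} (hm : 0 < m) (F : Fin m → EuclideanSpace ℝ (Fin n) → ℝ)
    (hF : ∀ i, ContDiff ℝ 1 (F i)) (x : EuclideanSpace ℝ (Fin n))
    (dx : EuclideanSpace ℝ (Fin n))
    (hdx : ∀ d' : EuclideanSpace ℝ (Fin n),
      phi (fun i => gradient (F i) x) dx ≤ phi (fun i => gradient (F i) x) d') :
    ParetoCritical F x ↔ dx = 0 := by
  haveI : Nonempty (Fin m) := ⟨⟨0, hm⟩⟩
  set g : Fin m → EuclideanSpace ℝ (Fin n) := fun i => gradient (F i) x with hg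
  have hbdd : ∀ d : EuclideanSpace ℝ (Fin n),
      BddAbove (Set.range fun i => ⟪g i, d⟫) := fun d => (Set.finite_range _).bddAbove
  have hphi0 : phi g 0 = 0 := by
    simp [phi, inner_zero_right]
  constructor
  · intro hcrit
    by_contra hdx0
    have h1 : phi g dx ≤ 0 := hphi0 ▸ hdx 0
    have hsup : (⨆ i, ⟪g i, dx⟫) ≤ -(‖dx‖ ^ 2 / 2) := by
      unfold phi at h1; linarith
    have hpos : 0 < ‖dx‖ := norm_pos_iff.mpr hdx0
    refine hcrit ⟨dx, fun i => lt_of_le_of_lt (le_trans (le_ciSup (hbdd dx) i) hsup) ?_⟩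
    nlinarith
  · intro hdx0
    rintro ⟨d, hd⟩
    obtain ⟨i0, hi0⟩ := Finite.exists_max (fun i => ⟪g i, d⟫)
    set M := ⟪g i0, d⟫ with hM'
    have hM : M < 0 := hd i0
    have hdne : d ≠ 0 := by
      intro h; rw [h] at hd; simpa using hd i0
    have hdn : 0 < ‖d‖ := norm_pos_iff.mpr hdne
    set t : ℝ := -M / ‖d‖ ^ 2 with ht
    have htpos : 0 < t := div_pos (neg_pos.mpr hM) (by positivity)
    have heq : ∀ i, ⟪g i, t • d⟫ = t * ⟪g i, d⟫ := fun i => real_inner_smul_right _ _ _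
    have hsup : (⨆ i, ⟪g i, t • d⟫) = t * M := by
      apply le_antisymm
      · apply ciSup_le; intro i; rw [heq i]
        exact mul_le_mul_of_nonneg_left (hi0 i) htpos.le
      · calc t * M = ⟪g i0, t • d⟫ := (heq i0).symm
          _ ≤ _ := le_ciSup (hbdd _) i0
    have hts : t * ‖d‖ ^ 2 = -M := by
      rw [ht]; field_simp
    have hlt : phi g (t • d) < 0 := by
      unfold phi
      rw [hsup, norm_smul, Real.norm_eq_abs, abs_of_pos htpos]
      have : (t * ‖d‖) ^ 2 = t * (t * ‖d‖ ^ 2) := by ring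
      rw [this, hts]
      nlinarith
    have h2 := hdx (t • d)
    rw [hdx0, hphi0] at h2
    linarith
end

section
/- Let F : ℝⁿ → ℝᵐ be continuously differentiable. Then the map x ↦ d(x) is continuous on ℝⁿ, where d(x) is the steepest descent direction at x. -/
open scoped RealInnerProductSpace

section aux

variable {n m : ℕ}

private lemma bdd (f : Fin m → ℝ) : BddAbove (Set.range f) :=
  (Set.finite_range f).bddAbove

/-- Strong convexity + optimality: quadratic growth of `phi` around a minimizer. -/
private lemma strong_growth [Nonempty (Fin m)] (g : Fin m → EuclideanSpace ℝ (Fin n))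
    (d d' : EuclideanSpace ℝ (Fin n)) (hmin : ∀ e, phi g d ≤ phi g e) :
    phi g d + ‖d - d'‖ ^ 2 / 4 ≤ phi g d' := by
  set mdl : EuclideanSpace ℝ (Fin n) := (2:ℝ)⁻¹ • (d + d') with hmdl
  have h1 := hmin mdl
  have hsup : (⨆ i, ⟪g i, mdl⟫) ≤ ((⨆ i, ⟪g i, d⟫) + ⨆ i, ⟪g i, d'⟫) / 2 := by
    apply ciSup_le
    intro i
    have : ⟪g i, mdl⟫ = (⟪g i, d⟫ + ⟪g i, d'⟫) / 2 := by
      rw [hmdl, real_inner_smul_right, inner_add_right]; ring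
    rw [this]
    have h2 : ⟪g i, d⟫ ≤ ⨆ j, ⟪g j, d⟫ := le_ciSup (f := fun j => ⟪g j, d⟫) (bdd _) i
    have h3 : ⟪g i, d'⟫ ≤ ⨆ j, ⟪g j, d'⟫ := le_ciSup (f := fun j => ⟪g j, d'⟫) (bdd _) i
    linarith
  have hnorm : ‖mdl‖ ^ 2 = (2 * ‖d‖ ^ 2 + 2 * ‖d'‖ ^ 2 - ‖d - d'‖ ^ 2) / 4 := by
    have hp := parallelogram_law_with_norm ℝ d d'
    have : ‖mdl‖ = ‖d + d'‖ / 2 := by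
      rw [hmdl, norm_smul]
      simp [abs_of_nonneg]
      ring
    rw [this]
    nlinarith [norm_nonneg (d + d'), norm_nonneg (d - d')]
  have hphi : phi g mdl ≤ ((⨆ i, ⟪g i, d⟫) + ⨆ i, ⟪g i, d'⟫) / 2 +
      (2 * ‖d‖ ^ 2 + 2 * ‖d'‖ ^ 2 - ‖d - d'‖ ^ 2) / 8 := by
    unfold phi
    rw [hnorm]
    linarith
  unfold phi at h1 ⊢
  linarith

/-- Comparing the sup terms for two gradient families. -/
private lemma sup_diff [Nonempty (Fin m)] (g g' : Fin m → EuclideanSpace ℝ (Fin n))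
    (e : EuclideanSpace ℝ (Fin n)) :
    (⨆ i, ⟪g i, e⟫) ≤ (⨆ i, ⟪g' i, e⟫) + (∑ i, ‖g i - g' i‖) * ‖e‖ := by
  apply ciSup_le
  intro i
  have h1 : ⟪g i, e⟫ = ⟪g' i, e⟫ + ⟪g i - g' i, e⟫ := by
    rw [inner_sub_left]; ring
  have h2 : ⟪g' i, e⟫ ≤ ⨆ j, ⟪g' j, e⟫ := le_ciSup (f := fun j => ⟪g' j, e⟫) (bdd _) i
  have h3 : ⟪g i - g' i, e⟫ ≤ ‖g i - g' i‖ * ‖e‖ := real_inner_le_norm _ _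
  have h4 : ‖g i - g' i‖ ≤ ∑ j, ‖g j - g' j‖ :=
    Finset.single_le_sum (f := fun j => ‖g j - g' j‖) (fun j _ => norm_nonneg _) (Finset.mem_univ i)
  have h5 : ‖g i - g' i‖ * ‖e‖ ≤ (∑ j, ‖g j - g' j‖) * ‖e‖ :=
    mul_le_mul_of_nonneg_right h4 (norm_nonneg _)
  linarith

/-- Key stability estimate for minimizers. -/
private lemma key_est [Nonempty (Fin m)] (g g' : Fin m → EuclideanSpace ℝ (Fin n))
    (d d' : EuclideanSpace ℝ (Fin n))
    (hd : ∀ e, phi g d ≤ phi g e) (hd' : ∀ e, phi g' d' ≤ phi g' e) :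
    ‖d - d'‖ ^ 2 ≤ 2 * (∑ i, ‖g i - g' i‖) * (‖d‖ + ‖d'‖) := by
  have h1 := strong_growth g d d' hd
  have h2 := strong_growth g' d' d hd'
  have hrev : ‖d' - d‖ = ‖d - d'‖ := norm_sub_rev _ _
  have h3 := sup_diff g g' d'
  have h4 := sup_diff g' g d
  have h5 : ∀ i, ‖g' i - g i‖ = ‖g i - g' i‖ := fun i => norm_sub_rev _ _
  simp only [h5] at h4
  unfold phi at h1 h2
  rw [hrev] at h2
  nlinarith [norm_nonneg d, norm_nonneg d']

/-- Norm bound on a minimizer. -/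
private lemma min_bound [Nonempty (Fin m)] (g : Fin m → EuclideanSpace ℝ (Fin n))
    (d : EuclideanSpace ℝ (Fin n)) (hd : ∀ e, phi g d ≤ phi g e) (i0 : Fin m) :
    ‖d‖ ≤ 2 * ‖g i0‖ := by
  have h0 : phi g (0 : EuclideanSpace ℝ (Fin n)) = 0 := by
    unfold phi
    simp
  have h1 := hd 0
  rw [h0] at h1
  unfold phi at h1
  have h2 : ⟪g i0, d⟫ ≤ ⨆ j, ⟪g j, d⟫ := le_ciSup (f := fun j => ⟪g j, d⟫) (bdd _) i0
  have h3 : -(‖g i0‖ * ‖d‖) ≤ ⟪g i0, d⟫ := neg_le_of_abs_le (abs_real_inner_le_norm _ _)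
  rcases (norm_nonneg d).eq_or_lt with h | h
  · rw [← h]; positivity
  · nlinarith
end aux

theorem stmt_4 {n m : ℕ} (hm : 0 < m) (F : Fin m → EuclideanSpace ℝ (Fin n) → ℝ)
    (hF : ∀ i, ContDiff ℝ 1 (F i))
    (dmap : EuclideanSpace ℝ (Fin n) → EuclideanSpace ℝ (Fin n))
    (hdmap : ∀ x, ∀ d' : EuclideanSpace ℝ (Fin n),
      phi (fun i => gradient (F i) x) (dmap x) ≤ phi (fun i => gradient (F i) x) d') :
    Continuous dmap := by
  haveI : Nonempty (Fin m) := ⟨⟨0, hm⟩⟩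
  set i0 : Fin m := ⟨0, hm⟩
  -- gradients are continuous
  have hgrad : ∀ i, Continuous (fun x => gradient (F i) x) := by
    intro i
    have hfd : Continuous (fun x => fderiv ℝ (F i) x) :=
      (hF i).continuous_fderiv one_ne_zero
    exact (InnerProductSpace.toDual ℝ (EuclideanSpace ℝ (Fin n))).symm.continuous.comp hfd
  rw [continuous_iff_continuousAt]
  intro x₀
  rw [ContinuousAt, tendsto_iff_norm_sub_tendsto_zero]
  set g : EuclideanSpace ℝ (Fin n) → Fin m → EuclideanSpace ℝ (Fin n) :=
    fun x i => gradient (F i) x with hg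
  -- continuous majorant
  set h : EuclideanSpace ℝ (Fin n) → ℝ := fun x =>
    2 * (∑ i, ‖g x i - g x₀ i‖) * (2 * ‖g x i0‖ + 2 * ‖g x₀ i0‖) with hh
  have hcont : Continuous h := by
    apply Continuous.mul
    · apply Continuous.mul continuous_const
      exact continuous_finset_sum _ fun i _ => ((hgrad i).sub continuous_const).norm
    · exact ((continuous_const.mul (hgrad i0).norm).add continuous_const)
  have hzero : h x₀ = 0 := by simp [hh]
  have hbound : ∀ x, ‖dmap x - dmap x₀‖ ≤ Real.sqrt (h x) := by
    intro x
    apply Real.le_sqrt_of_sq_le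
    have hkey := key_est (g x) (g x₀) (dmap x) (dmap x₀) (hdmap x) (hdmap x₀)
    have hb1 : ‖dmap x‖ ≤ 2 * ‖g x i0‖ := min_bound (g x) (dmap x) (hdmap x) i0
    have hb2 : ‖dmap x₀‖ ≤ 2 * ‖g x₀ i0‖ := min_bound (g x₀) (dmap x₀) (hdmap x₀) i0
    have hS : (0:ℝ) ≤ ∑ i, ‖g x i - g x₀ i‖ :=
      Finset.sum_nonneg fun i _ => norm_nonneg _
    calc ‖dmap x - dmap x₀‖ ^ 2
        ≤ 2 * (∑ i, ‖g x i - g x₀ i‖) * (‖dmap x‖ + ‖dmap x₀‖) := hkey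
      _ ≤ h x := by
          rw [hh]
          apply mul_le_mul_of_nonneg_left (by linarith) (by linarith)
  have hsqrt : Filter.Tendsto (fun x => Real.sqrt (h x)) (nhds x₀) (nhds 0) := by
    have : Filter.Tendsto (fun x => Real.sqrt (h x)) (nhds x₀) (nhds (Real.sqrt (h x₀))) :=
      (Real.continuous_sqrt.comp hcont).continuousAt
    rwa [hzero, Real.sqrt_zero] at this
  exact squeeze_zero (fun x => norm_nonneg _) hbound hsqrt
end

section
/- For any vectors g_1, …, g_m in ℝⁿ, one has min_{d∈ℝⁿ} [max_{1≤i≤m} ⟨g_i, d⟩ + (1/2)‖d‖²] = −(1/2) · min_{λ∈Δ_m} ‖Σ_{i=1}^m λ_i g_i‖². -/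
set_option maxHeartbeats 1000000


open scoped RealInnerProductSpace

theorem stmt_5 {n m : ℕ} (hm : 0 < m) (g : Fin m → EuclideanSpace ℝ (Fin n)) :
    (⨅ d : EuclideanSpace ℝ (Fin n), phi g d) =
      -(1 / 2) * ⨅ lam : stdSimplex ℝ (Fin m), ‖∑ i, (lam : Fin m → ℝ) i • g i‖ ^ 2 := by
  haveI : Nonempty (Fin m) := ⟨⟨0, hm⟩⟩
  set f : (Fin m → ℝ) → ℝ := fun lam => ‖∑ i, lam i • g i‖ ^ 2 with hf
  have hcont : Continuous f := by
    apply Continuous.pow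
    apply Continuous.norm
    exact continuous_finset_sum _ fun i _ => (continuous_apply i).smul continuous_const
  obtain ⟨lam0, hmem, hmin⟩ :=
    (isCompact_stdSimplex ℝ (Fin m)).exists_isMinOn ⟨_, ite_eq_mem_stdSimplex ℝ ⟨0, hm⟩⟩
      hcont.continuousOn
  set v : EuclideanSpace ℝ (Fin n) := ∑ i, lam0 i • g i with hv
  -- minimality of lam0
  have hmin' : ∀ lam ∈ stdSimplex ℝ (Fin m), ‖v‖ ^ 2 ≤ f lam := fun lam hl => hmin hl
  -- key variational inequality
  have keyA : ∀ i, ‖v‖ ^ 2 ≤ ⟪v, g i⟫ := by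
    intro i
    set w : EuclideanSpace ℝ (Fin n) := g i - v with hw
    set c : ℝ := ⟪v, w⟫ with hc
    set s : ℝ := ‖w‖ ^ 2 with hs
    have hkey : ∀ t : ℝ, 0 < t → t ≤ 1 → 0 ≤ 2 * t * c + t ^ 2 * s := by
      intro t ht ht1
      have hmemt : (fun j => (1 - t) * lam0 j + t * (if j = i then (1:ℝ) else 0)) ∈
          stdSimplex ℝ (Fin m) := by
        have hei : (fun j => if j = i then (1:ℝ) else 0) ∈ stdSimplex ℝ (Fin m) := by
          constructor
          · intro j
            dsimp only
            split <;> norm_num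
          · simp
        have h := (convex_stdSimplex ℝ (Fin m)) hmem hei (a := 1 - t) (b := t)
          (by linarith) ht.le (by ring)
        have he : (fun j => (1 - t) * lam0 j + t * (if j = i then (1:ℝ) else 0))
            = (1 - t) • lam0 + t • (fun j => if j = i then (1:ℝ) else 0) := by
          funext j; simp [smul_eq_mul]
        rw [he]; exact h
      have hs1 : ∑ j, ((1 - t) * lam0 j + t * (if j = i then (1:ℝ) else 0)) • g j
          = v + t • w := by
        have h2 : ∑ j, ((if j = i then (1:ℝ) else 0)) • g j = g i := by
          rw [Finset.sum_eq_single_of_mem i (Finset.mem_univ i)]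
          · simp
          · intro j _ hji
            simp [if_neg hji]
        have : ∑ j, ((1 - t) * lam0 j + t * (if j = i then (1:ℝ) else 0)) • g j
            = (1 - t) • ∑ j, lam0 j • g j + t • ∑ j, ((if j = i then (1:ℝ) else 0)) • g j := by
          rw [Finset.smul_sum, Finset.smul_sum, ← Finset.sum_add_distrib]
          congr 1; funext j
          rw [add_smul, mul_smul, mul_smul]
        rw [this, h2, hw, hv]
        module
      have hle := hmin' _ hmemt
      rw [hf] at hle
      simp only [hs1] at hle
      have hexp : ‖v + t • w‖ ^ 2 = ‖v‖ ^ 2 + 2 * t * c + t ^ 2 * s := by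
        rw [norm_add_sq_real, real_inner_smul_right, norm_smul, Real.norm_eq_abs,
          abs_of_pos ht, ← hc, hs]
        ring
      rw [hexp] at hle
      linarith
    have hc0 : 0 ≤ c := by
      by_contra hcn
      push_neg at hcn
      have hsn : 0 ≤ s := by positivity
      set t : ℝ := min 1 (-c / (s + 1)) with ht
      have htpos : 0 < t := lt_min one_pos (div_pos (by linarith) (by positivity))
      have ht1 : t ≤ 1 := min_le_left _ _
      have hts : t * s ≤ -c := by
        have h1 : t ≤ -c / (s + 1) := min_le_right _ _
        have h2 : t * (s + 1) ≤ -c := by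
          rw [← div_mul_cancel₀ (-c) (by positivity : (s:ℝ) + 1 ≠ 0)]
          exact mul_le_mul_of_nonneg_right h1 (by positivity)
        nlinarith
      have := hkey t htpos ht1
      nlinarith
    have : ⟪v, g i⟫ = ‖v‖ ^ 2 + c := by
      rw [hc, hw, inner_sub_right, real_inner_self_eq_norm_sq]
      ring
    linarith
  -- the inf over the simplex equals ‖v‖²
  have hinf2 : (⨅ lam : stdSimplex ℝ (Fin m), ‖∑ i, (lam : Fin m → ℝ) i • g i‖ ^ 2)
      = ‖v‖ ^ 2 := by
    haveI : Nonempty (stdSimplex ℝ (Fin m)) := ⟨⟨lam0, hmem⟩⟩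
    apply le_antisymm
    · refine ciInf_le ?_ (⟨lam0, hmem⟩ : stdSimplex ℝ (Fin m))
      refine ⟨‖v‖ ^ 2, ?_⟩
      rintro x ⟨⟨l, hl⟩, rfl⟩
      exact hmin' l hl
    · refine le_ciInf ?_
      rintro ⟨l, hl⟩
      exact hmin' l hl
  rw [hinf2]
  -- lower bound for phi
  have hlow : ∀ d : EuclideanSpace ℝ (Fin n), -(1 / 2) * ‖v‖ ^ 2 ≤ phi g d := by
    intro d
    have hbdd : BddAbove (Set.range fun i => ⟪g i, d⟫) :=
      (Set.finite_range _).bddAbove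
    have hS : ⟪v, d⟫ ≤ ⨆ i, ⟪g i, d⟫ := by
      have hvd : ⟪v, d⟫ = ∑ i, lam0 i * ⟪g i, d⟫ := by
        rw [hv, sum_inner]
        exact Finset.sum_congr rfl fun i _ => real_inner_smul_left _ _ _
      rw [hvd]
      calc ∑ i, lam0 i * ⟪g i, d⟫
          ≤ ∑ i, lam0 i * (⨆ j, ⟪g j, d⟫) := by
            apply Finset.sum_le_sum
            intro i _
            exact mul_le_mul_of_nonneg_left (le_ciSup hbdd i) (hmem.1 i)
        _ = ⨆ j, ⟪g j, d⟫ := by rw [← Finset.sum_mul, hmem.2, one_mul]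
    have hgeo : 0 ≤ ‖v + d‖ ^ 2 := by positivity
    rw [norm_add_sq_real] at hgeo
    unfold phi
    nlinarith
  -- value at d = -v
  have hval : phi g (-v) ≤ -(1 / 2) * ‖v‖ ^ 2 := by
    have hS : (⨆ i, ⟪g i, -v⟫) ≤ -‖v‖ ^ 2 := by
      apply ciSup_le
      intro i
      rw [inner_neg_right, real_inner_comm]
      linarith [keyA i]
    unfold phi
    rw [norm_neg]
    linarith
  apply le_antisymm
  · refine le_trans (ciInf_le ?_ (-v)) hval
    refine ⟨-(1 / 2) * ‖v‖ ^ 2, ?_⟩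
    rintro x ⟨d, rfl⟩
    exact hlow d
  · exact le_ciInf hlow
end

section
/- Let g_1, …, g_m be vectors in ℝⁿ and let λ* ∈ Δ_m be a minimizer of λ ↦ ‖Σ_{i=1}^m λ_i g_i‖ over Δ_m. Then d* = −Σ_{i=1}^m λ*_i g_i is the unique minimizer of d ↦ max_{1≤i≤m} ⟨g_i, d⟩ + (1/2)‖d‖² over ℝⁿ. -/
open scoped RealInnerProductSpace

lemma small_t_aux (c s : ℝ) (hs : 0 ≤ s)
    (H : ∀ t : ℝ, 0 < t → t ≤ 1 → 0 ≤ 2 * c + t * s) : 0 ≤ c := by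
  by_contra h
  push_neg at h
  rcases eq_or_lt_of_le hs with hs0 | hs0
  · have := H 1 one_pos le_rfl
    nlinarith
  · have ht0 : 0 < min 1 (-c / s) := by
      apply lt_min one_pos
      exact div_pos (by linarith) hs0
    have := H _ ht0 (min_le_left _ _)
    have h2 : min 1 (-c / s) * s ≤ (-c / s) * s :=
      mul_le_mul_of_nonneg_right (min_le_right _ _) hs
    have h3 : (-c / s) * s = -c := by field_simp
    linarith

theorem stmt_6 {n m : ℕ} (hm : 0 < m) (g : Fin m → EuclideanSpace ℝ (Fin n))
    (lam : Fin m → ℝ) (hlam : lam ∈ stdSimplex ℝ (Fin m))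
    (hmin : ∀ mu ∈ stdSimplex ℝ (Fin m), ‖∑ i, lam i • g i‖ ≤ ‖∑ i, mu i • g i‖) :
    (∀ d' : EuclideanSpace ℝ (Fin n), phi g (-∑ i, lam i • g i) ≤ phi g d') ∧
      (∀ d : EuclideanSpace ℝ (Fin n),
        (∀ d' : EuclideanSpace ℝ (Fin n), phi g d ≤ phi g d') → d = -∑ i, lam i • g i) := by
  haveI : Nonempty (Fin m) := ⟨⟨0, hm⟩⟩
  set G : EuclideanSpace ℝ (Fin n) := ∑ i, lam i • g i with hG
  obtain ⟨hlam0, hlam1⟩ := hlam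
  -- key optimality fact
  have key : ∀ i, ‖G‖ ^ 2 ≤ ⟪g i, G⟫ := by
    intro i
    have hkey : 0 ≤ ⟪G, g i - G⟫ := by
      apply small_t_aux _ (‖g i - G‖ ^ 2) (by positivity)
      intro t ht0 ht1
      set mu : Fin m → ℝ := fun j => (1 - t) * lam j + t * (if j = i then 1 else 0) with hmu
      have hmus : mu ∈ stdSimplex ℝ (Fin m) := by
        constructor
        · intro j
          have := hlam0 j
          dsimp [mu]
          split <;> nlinarith
        · simp [mu, Finset.sum_add_distrib, ← Finset.mul_sum, hlam1]
      have hsum : ∑ j, mu j • g j = (1 - t) • G + t • g i := by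
        simp only [mu, add_smul, Finset.sum_add_distrib, mul_smul, ← Finset.smul_sum, hG]
        congr 1
        simp [ite_smul, mul_ite, Finset.smul_sum]
      have h1 := hmin mu hmus
      rw [hsum] at h1
      have h2 : (1 - t) • G + t • g i = G + t • (g i - G) := by
        module
      rw [h2] at h1
      have h3 : ‖G + t • (g i - G)‖ ^ 2 =
          ‖G‖ ^ 2 + 2 * ⟪G, t • (g i - G)⟫ + ‖t • (g i - G)‖ ^ 2 := by
        rw [norm_add_sq_real]
      have h4 : ‖G‖ ^ 2 ≤ ‖G + t • (g i - G)‖ ^ 2 := by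
        apply pow_le_pow_left₀ (norm_nonneg _) h1
      rw [real_inner_smul_right, norm_smul, mul_pow] at h3
      have h5 : ‖t‖ ^ 2 = t * t := by
        rw [Real.norm_eq_abs, sq_abs]; ring
      rw [h5] at h3
      have h6 : 0 ≤ 2 * t * ⟪G, g i - G⟫ + t * t * ‖g i - G‖ ^ 2 := by nlinarith
      have h7 : 0 ≤ t * (2 * ⟪G, g i - G⟫ + t * ‖g i - G‖ ^ 2) := by nlinarith
      nlinarith [(nonneg_of_mul_nonneg_right h7 ht0 : (0:ℝ) ≤ 2 * ⟪G, g i - G⟫ + t * ‖g i - G‖ ^ 2)]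
    rw [inner_sub_right, real_inner_self_eq_norm_sq] at hkey
    rw [real_inner_comm]
    linarith
  have bdd : ∀ d : EuclideanSpace ℝ (Fin n), BddAbove (Set.range fun i => ⟪g i, d⟫) :=
    fun d => Set.Finite.bddAbove (Set.finite_range _)
  -- φ(-G) ≤ -‖G‖²/2
  have hupper : phi g (-G) ≤ -‖G‖ ^ 2 / 2 := by
    unfold phi
    have hsup : (⨆ i, ⟪g i, -G⟫) ≤ -‖G‖ ^ 2 := by
      apply ciSup_le
      intro i
      rw [inner_neg_right]
      linarith [key i]
    have hn : ‖(-G : EuclideanSpace ℝ (Fin n))‖ = ‖G‖ := norm_neg G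
    rw [hn]
    linarith
  -- φ(d) ≥ ⟪G,d⟫ + ‖d‖²/2
  have hlower : ∀ d : EuclideanSpace ℝ (Fin n), -‖G‖ ^ 2 / 2 + ‖d + G‖ ^ 2 / 2 ≤ phi g d := by
    intro d
    have h1 : ⟪G, d⟫ ≤ ⨆ i, ⟪g i, d⟫ := by
      have h2 : ⟪G, d⟫ = ∑ i, lam i * ⟪g i, d⟫ := by
        rw [hG, sum_inner]
        exact Finset.sum_congr rfl fun i _ => real_inner_smul_left _ _ _
      rw [h2]
      calc ∑ i, lam i * ⟪g i, d⟫ ≤ ∑ i, lam i * (⨆ j, ⟪g j, d⟫) := by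
            apply Finset.sum_le_sum
            intro i _
            exact mul_le_mul_of_nonneg_left (le_ciSup (bdd d) i) (hlam0 i)
        _ = ⨆ j, ⟪g j, d⟫ := by simp [← Finset.sum_mul, hlam1]
    have h3 : ‖d + G‖ ^ 2 = ‖d‖ ^ 2 + 2 * ⟪d, G⟫ + ‖G‖ ^ 2 := by
      rw [norm_add_sq_real]
    unfold phi
    have h6 : ⟪d, G⟫ = ⟪G, d⟫ := real_inner_comm G d
    nlinarith
  constructor
  · intro d'
    calc phi g (-G) ≤ -‖G‖ ^ 2 / 2 := hupper
      _ ≤ -‖G‖ ^ 2 / 2 + ‖d' + G‖ ^ 2 / 2 := by linarith [sq_nonneg ‖d' + G‖]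
      _ ≤ phi g d' := hlower d'
  · intro d hd
    have h1 : phi g d ≤ -‖G‖ ^ 2 / 2 := (hd (-G)).trans hupper
    have h2 := hlower d
    have h3 : ‖d + G‖ ^ 2 ≤ 0 := by linarith
    have h4 : d + G = 0 := by
      have := sq_nonneg ‖d + G‖
      have h5 : ‖d + G‖ = 0 := by nlinarith [norm_nonneg (d + G)]
      exact norm_eq_zero.mp h5
    rw [eq_neg_iff_add_eq_zero]
    exact h4
end

section
/- Let g_1, …, g_m be vectors in ℝⁿ and let d* be the unique minimizer of d ↦ max_{1≤i≤m} ⟨g_i, d⟩ + (1/2)‖d‖² over ℝⁿ. Then ⟨g_i, d*⟩ ≤ −‖d*‖² for every i ∈ {1,…,m}. -/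
open scoped RealInnerProductSpace

theorem stmt_7 {n m : ℕ} (hm : 0 < m) (g : Fin m → EuclideanSpace ℝ (Fin n))
    (dstar : EuclideanSpace ℝ (Fin n))
    (hdstar : ∀ d' : EuclideanSpace ℝ (Fin n), phi g dstar ≤ phi g d') :
    ∀ i, ⟪g i, dstar⟫ ≤ -‖dstar‖ ^ 2 := by
  haveI : Nonempty (Fin m) := ⟨⟨0, hm⟩⟩
  set M : ℝ := ⨆ i, ⟪g i, dstar⟫ with hM
  have hbdd : BddAbove (Set.range fun i => ⟪g i, dstar⟫) :=
    Set.Finite.bddAbove (Set.finite_range _)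
  have key : ∀ t : ℝ, 0 < t → t ≤ 1 → M + ‖dstar‖ ^ 2 ≤ t * ‖dstar‖ ^ 2 / 2 := by
    intro t ht ht1
    have h := hdstar ((1 - t) • dstar)
    unfold phi at h
    have hsup : (⨆ i, ⟪g i, (1 - t) • dstar⟫) ≤ (1 - t) * M := by
      apply ciSup_le
      intro i
      rw [real_inner_smul_right]
      exact mul_le_mul_of_nonneg_left (le_ciSup hbdd i) (by linarith)
    have hnorm : ‖(1 - t) • dstar‖ ^ 2 = (1 - t) ^ 2 * ‖dstar‖ ^ 2 := by
      rw [norm_smul, Real.norm_eq_abs, mul_pow, sq_abs]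
    rw [hnorm] at h
    nlinarith [h, hsup, sq_nonneg (‖dstar‖)]
  have hMle : M ≤ -‖dstar‖ ^ 2 := by
    by_contra hcon
    push_neg at hcon
    set ε : ℝ := M + ‖dstar‖ ^ 2 with hε
    have hεpos : 0 < ε := by linarith
    set t : ℝ := min 1 (ε / (‖dstar‖ ^ 2 + 1)) with ht
    have hden : (0:ℝ) < ‖dstar‖ ^ 2 + 1 := by positivity
    have ht0 : 0 < t := lt_min one_pos (div_pos hεpos hden)
    have ht1 : t ≤ 1 := min_le_left _ _
    have h2 := key t ht0 ht1
    have ht2 : t ≤ ε / (‖dstar‖ ^ 2 + 1) := min_le_right _ _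
    have : t * (‖dstar‖ ^ 2 + 1) ≤ ε := by
      rw [← le_div_iff₀ hden]; exact ht2
    nlinarith [sq_nonneg (‖dstar‖)]
  intro i
  exact le_trans (le_ciSup hbdd i) hMle
end

section
/- Let F : ℝⁿ → ℝᵐ be continuously differentiable and let x ∈ ℝⁿ be a point that is not Pareto critical. Then for any σ ∈ (0,1) there exists β₀ ∈ (0,1] such that F_i(x + β·d(x)) − F_i(x) ≤ σβθ(x) for all β ∈ [0, β₀] and all i ∈ {1,…,m}. -/
open scoped RealInnerProductSpace

set_option maxHeartbeats 1000000
theorem stmt_8 {n m : ℕ} (hm : 0 < m) (F : Fin m → EuclideanSpace ℝ (Fin n) → ℝ)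
    (hF : ∀ i, ContDiff ℝ 1 (F i)) (x : EuclideanSpace ℝ (Fin n))
    (hx : ¬ ParetoCritical F x) (σ : ℝ) (hσ : σ ∈ Set.Ioo (0 : ℝ) 1)
    (dx : EuclideanSpace ℝ (Fin n))
    (hdx : ∀ d' : EuclideanSpace ℝ (Fin n),
      phi (fun i => gradient (F i) x) dx ≤ phi (fun i => gradient (F i) x) d') :
    ∃ β₀ ∈ Set.Ioc (0 : ℝ) 1, ∀ β ∈ Set.Icc (0 : ℝ) β₀, ∀ i,
      F i (x + β • dx) - F i x ≤ σ * β * theta F x := by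
  obtain ⟨hσ0, hσ1⟩ := hσ
  haveI : Nonempty (Fin m) := ⟨⟨0, hm⟩⟩
  set g : Fin m → EuclideanSpace ℝ (Fin n) := fun i => gradient (F i) x with hg
  have hbdd : BddBelow (Set.range (phi g)) := ⟨phi g dx, by rintro y ⟨d', rfl⟩; exact hdx d'⟩
  set θ := theta F x with hθdef
  have hθeq : θ = phi g dx := le_antisymm (ciInf_le hbdd dx) (le_ciInf hdx)
  -- θ < 0
  rw [ParetoCritical, not_not] at hx
  obtain ⟨d, hd⟩ := hx
  have hdne : d ≠ 0 := by
    intro h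
    have := hd ⟨0, hm⟩
    rw [h, inner_zero_right] at this
    exact lt_irrefl 0 this
  have hnd : (0:ℝ) < ‖d‖ ^ 2 := pow_pos (norm_pos_iff.mpr hdne) 2
  set M : ℝ := ⨆ i, ⟪g i, d⟫ with hM
  have hMneg : M < 0 := by
    obtain ⟨j, hj⟩ := Finite.exists_max (fun i => ⟪g i, d⟫)
    exact lt_of_le_of_lt (ciSup_le hj) (hd j)
  set t : ℝ := -M / ‖d‖ ^ 2 with ht
  have htpos : 0 < t := div_pos (by linarith) hnd
  have hsup_le : (⨆ i, ⟪g i, t • d⟫) ≤ t * M := by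
    refine ciSup_le fun i => ?_
    rw [real_inner_smul_right]
    exact mul_le_mul_of_nonneg_left
      (le_ciSup (f := fun j => ⟪g j, d⟫) (Set.finite_range _).bddAbove i) htpos.le
  have hθneg : θ < 0 := by
    have h1 : θ ≤ phi g (t • d) := ciInf_le hbdd (t • d)
    have h2 : phi g (t • d) ≤ t * M + t ^ 2 * ‖d‖ ^ 2 / 2 := by
      have : ‖t • d‖ ^ 2 = t ^ 2 * ‖d‖ ^ 2 := by
        rw [norm_smul, mul_pow, Real.norm_eq_abs, sq_abs]
      rw [phi, this]
      linarith [hsup_le]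
    have h3 : t * M + t ^ 2 * ‖d‖ ^ 2 / 2 < 0 := by
      have hM' : t * ‖d‖ ^ 2 = -M := by rw [ht]; field_simp
      have h4 : t ^ 2 * ‖d‖ ^ 2 = t * (-M) := by rw [pow_two, mul_assoc, hM']
      rw [h4]
      nlinarith [mul_pos htpos (neg_pos.mpr hMneg)]
    linarith
  -- derivative
  have hderiv : ∀ i, HasDerivAt (fun β : ℝ => F i (x + β • dx)) ⟪g i, dx⟫ 0 := by
    intro i
    have hdiff : DifferentiableAt ℝ (F i) x := ((hF i).differentiable one_ne_zero).differentiableAt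
    have hgrad := hdiff.hasGradientAt
    have hfd : HasFDerivAt (F i) (InnerProductSpace.toDual ℝ _ (g i)) x := hgrad
    have hL : HasDerivAt (fun β : ℝ => x + β • dx) dx 0 := by
      simpa using ((hasDerivAt_id (0:ℝ)).smul_const dx).const_add x
    have hL0 : x + (0:ℝ) • dx = x := by simp
    have hfd' : HasFDerivAt (F i) (InnerProductSpace.toDual ℝ _ (g i)) (x + (0:ℝ) • dx) := by
      rw [hL0]; exact hfd
    have := hfd'.comp_hasDerivAt 0 hL
    simp only [InnerProductSpace.toDual_apply_apply] at this
    exact this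
  set ε : ℝ := (1 - σ) * (-θ) with hε
  have hεpos : 0 < ε := by
    apply mul_pos <;> linarith
  have hev : ∀ᶠ β : ℝ in nhds 0, ∀ i,
      ‖F i (x + β • dx) - F i x - β * ⟪g i, dx⟫‖ ≤ ε * ‖β‖ := by
    rw [Filter.eventually_all]
    intro i
    have hlo := (hderiv i).isLittleO
    have := hlo.def hεpos
    simpa [smul_eq_mul] using this
  obtain ⟨δ, hδpos, hδ⟩ := Metric.eventually_nhds_iff.mp hev
  refine ⟨min 1 (δ / 2), ⟨lt_min one_pos (by linarith), min_le_left _ _⟩, ?_⟩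
  intro β hβ i
  obtain ⟨hβ0, hβ1⟩ := hβ
  have hβδ : dist β (0:ℝ) < δ := by
    rw [Real.dist_eq, sub_zero, abs_of_nonneg hβ0]
    have := le_trans hβ1 (min_le_right 1 (δ / 2))
    linarith
  have hkey := hδ hβδ i
  rw [Real.norm_eq_abs, Real.norm_eq_abs, abs_of_nonneg hβ0] at hkey
  have habs : F i (x + β • dx) - F i x - β * ⟪g i, dx⟫ ≤ ε * β := le_trans (le_abs_self _) hkey
  have hcθ : ⟪g i, dx⟫ ≤ θ := by
    have h1 : ⟪g i, dx⟫ ≤ ⨆ j, ⟪g j, dx⟫ :=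
      le_ciSup (f := fun j => ⟪g j, dx⟫) (Set.finite_range _).bddAbove i
    have h2 : (⨆ j, ⟪g j, dx⟫) ≤ phi g dx := by
      rw [phi]; nlinarith [sq_nonneg ‖dx‖]
    rw [hθeq]; linarith
  have : F i (x + β • dx) - F i x ≤ β * θ + ε * β := by nlinarith
  rw [hε] at this
  nlinarith
end

section
/- Let F : ℝⁿ → ℝᵐ be continuously differentiable, let α_1, …, α_m > 0, and let d_BB be the Barzilai–Borwein descent direction at x for the weights α_1,…,α_m. Then: (i) x is Pareto critical if and only if d_BB = 0; (ii) if d_BB ≠ 0 then ⟨∇F_i(x), d_BB⟩ ≤ −α_i‖d_BB‖² < 0 for every i ∈ {1,…,m}, so d_BB is a descent direction for F at x. -/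
open scoped RealInnerProductSpace

theorem stmt_12 {n m : ℕ} (hm : 0 < m) (F : Fin m → EuclideanSpace ℝ (Fin n) → ℝ)
    (hF : ∀ i, ContDiff ℝ 1 (F i)) (x : EuclideanSpace ℝ (Fin n))
    (α : Fin m → ℝ) (hα : ∀ i, 0 < α i)
    (dBB : EuclideanSpace ℝ (Fin n))
    (hdBB : ∀ d' : EuclideanSpace ℝ (Fin n),
      phi (fun i => (α i)⁻¹ • gradient (F i) x) dBB ≤
        phi (fun i => (α i)⁻¹ • gradient (F i) x) d') :
    (ParetoCritical F x ↔ dBB = 0) ∧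
      (dBB ≠ 0 → ∀ i, ⟪gradient (F i) x, dBB⟫ ≤ -(α i) * ‖dBB‖ ^ 2 ∧
        -(α i) * ‖dBB‖ ^ 2 < 0) := by
  haveI : Nonempty (Fin m) := ⟨⟨0, hm⟩⟩
  set g : Fin m → EuclideanSpace ℝ (Fin n) := fun i => (α i)⁻¹ • gradient (F i) x with hg
  have hbdd : ∀ d : EuclideanSpace ℝ (Fin n),
      BddAbove (Set.range fun i => ⟪g i, d⟫) := fun d => (Set.finite_range _).bddAbove
  have hginner : ∀ i (d : EuclideanSpace ℝ (Fin n)),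
      ⟪g i, d⟫ = (α i)⁻¹ * ⟪gradient (F i) x, d⟫ := by
    intro i d
    exact real_inner_smul_left _ _ _
  have hphi0 : phi g 0 = 0 := by
    simp [phi]
  -- key scaling inequality
  set M := ⨆ i, ⟪g i, dBB⟫ with hM
  have key : ∀ t : ℝ, 0 ≤ t → t < 1 → M ≤ -(1 + t) * (‖dBB‖ ^ 2 / 2) := by
    intro t ht0 ht1
    have h1 := hdBB (t • dBB)
    have hsup : (⨆ i, ⟪g i, t • dBB⟫) ≤ t * M := by
      refine ciSup_le fun i => ?_
      rw [real_inner_smul_right]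
      exact mul_le_mul_of_nonneg_left (le_ciSup (hbdd dBB) i) ht0
    have hnorm : ‖t • dBB‖ ^ 2 = t ^ 2 * ‖dBB‖ ^ 2 := by
      rw [norm_smul, mul_pow, Real.norm_eq_abs, sq_abs]
    have h2 : M + ‖dBB‖ ^ 2 / 2 ≤ t * M + t ^ 2 * ‖dBB‖ ^ 2 / 2 := by
      have := h1
      unfold phi at this
      rw [hnorm] at this
      linarith [hsup]
    nlinarith [h2, ht1, sq_nonneg (1 - t)]
  have hMle : M ≤ -‖dBB‖ ^ 2 := by
    have htend : Filter.Tendsto (fun t : ℝ => -(1 + t) * (‖dBB‖ ^ 2 / 2))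
        (nhdsWithin 1 (Set.Iio 1)) (nhds (-(1 + 1) * (‖dBB‖ ^ 2 / 2))) :=
      (((continuous_const.add continuous_id).neg.mul continuous_const).tendsto 1).mono_left
        nhdsWithin_le_nhds
    have hle : M ≤ -(1 + 1) * (‖dBB‖ ^ 2 / 2) := by
      refine ge_of_tendsto htend ?_
      filter_upwards [Ioo_mem_nhdsLT_of_mem
        (show (1 : ℝ) ∈ Set.Ioc 0 1 by norm_num)] with t ht
      exact key t ht.1.le ht.2
    linarith
  have hii : dBB ≠ 0 → ∀ i, ⟪gradient (F i) x, dBB⟫ ≤ -(α i) * ‖dBB‖ ^ 2 ∧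
      -(α i) * ‖dBB‖ ^ 2 < 0 := by
    intro hne i
    have hgi : ⟪g i, dBB⟫ ≤ -‖dBB‖ ^ 2 := le_trans (le_ciSup (hbdd dBB) i) hMle
    have hα' := hα i
    have h1 : ⟪gradient (F i) x, dBB⟫ = α i * ⟪g i, dBB⟫ := by
      rw [hginner i dBB]; field_simp
    have hnpos : 0 < ‖dBB‖ ^ 2 := pow_pos (norm_pos_iff.mpr hne) 2
    constructor
    · rw [h1]; nlinarith
    · nlinarith
  refine ⟨⟨?_, ?_⟩, hii⟩
  · intro hcrit
    by_contra hne
    exact hcrit ⟨dBB, fun i => lt_of_le_of_lt ((hii hne i).1) ((hii hne i).2)⟩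
  · intro h0
    rintro ⟨d, hd⟩
    have hdg : ∀ i, ⟪g i, d⟫ < 0 := by
      intro i
      rw [hginner i d]
      exact mul_neg_of_pos_of_neg (inv_pos.mpr (hα i)) (hd i)
    obtain ⟨j, hj⟩ := Finite.exists_max fun i => ⟪g i, d⟫
    set M' := ⨆ i, ⟪g i, d⟫ with hM'
    have hM'le : M' ≤ ⟪g j, d⟫ := ciSup_le hj
    have hM'neg : M' < 0 := lt_of_le_of_lt hM'le (hdg j)
    have hdne : d ≠ 0 := by
      intro h
      have := hdg j
      rw [h, inner_zero_right] at this
      exact lt_irrefl 0 this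
    have hnpos : 0 < ‖d‖ ^ 2 := pow_pos (norm_pos_iff.mpr hdne) 2
    set t : ℝ := -M' / ‖d‖ ^ 2 with ht
    have ht0 : 0 < t := div_pos (neg_pos.mpr hM'neg) hnpos
    have hsup : (⨆ i, ⟪g i, t • d⟫) ≤ t * M' := by
      refine ciSup_le fun i => ?_
      rw [real_inner_smul_right]
      exact mul_le_mul_of_nonneg_left (le_ciSup (hbdd d) i) ht0.le
    have hphit : phi g (t • d) < 0 := by
      unfold phi
      have hnorm : ‖t • d‖ ^ 2 = t ^ 2 * ‖d‖ ^ 2 := by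
        rw [norm_smul, mul_pow, Real.norm_eq_abs, sq_abs]
      rw [hnorm]
      have htd : t * ‖d‖ ^ 2 = -M' := by
        rw [ht]; field_simp
      have : t ^ 2 * ‖d‖ ^ 2 = t * (-M') := by
        rw [pow_two, mul_assoc, htd]
      rw [this]
      nlinarith
    have := hdBB (t • d)
    rw [h0, hphi0] at this
    linarith
end

section
/- Let F : ℝⁿ → ℝᵐ be continuously differentiable, let L > 0, let x ∈ ℝⁿ, and let α_1,…,α_m ∈ (0, L]. If d_BB is the Barzilai–Borwein descent direction at x for the weights α_1,…,α_m and d(x) is the steepest descent direction at x, then ‖d_BB‖ ≥ (1/L)‖d(x)‖. -/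
open scoped RealInnerProductSpace

lemma phi_smul {n m : ℕ} (hm : 0 < m) (g : Fin m → EuclideanSpace ℝ (Fin n))
    (d : EuclideanSpace ℝ (Fin n)) {t : ℝ} (ht : 0 ≤ t) :
    phi g (t • d) = t * (⨆ i, ⟪g i, d⟫) + t ^ 2 * (‖d‖ ^ 2 / 2) := by
  have : Nonempty (Fin m) := ⟨⟨0, hm⟩⟩
  unfold phi
  rw [norm_smul]
  have h1 : (⨆ i, ⟪g i, t • d⟫) = t * ⨆ i, ⟪g i, d⟫ := by
    rw [Real.mul_iSup_of_nonneg ht]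
    congr 1; ext i; rw [real_inner_smul_right]
  rw [h1]
  rw [mul_pow, Real.norm_eq_abs, sq_abs]
  ring

lemma iSup_eq_neg_norm_sq {n m : ℕ} (hm : 0 < m) (g : Fin m → EuclideanSpace ℝ (Fin n))
    (d : EuclideanSpace ℝ (Fin n))
    (hmin : ∀ d' : EuclideanSpace ℝ (Fin n), phi g d ≤ phi g d') :
    (⨆ i, ⟪g i, d⟫) = -‖d‖ ^ 2 := by
  have : Nonempty (Fin m) := ⟨⟨0, hm⟩⟩
  set M : ℝ := ⨆ i, ⟪g i, d⟫ with hM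
  have key : ∀ t : ℝ, 0 ≤ t → (1 - t) * (M + (1 + t) * (‖d‖ ^ 2 / 2)) ≤ 0 := by
    intro t ht
    have h := hmin (t • d)
    rw [phi_smul hm g d ht] at h
    have hd1 : phi g d = M + ‖d‖ ^ 2 / 2 := rfl
    rw [hd1] at h
    nlinarith [h]
  have htendlt : Filter.Tendsto (fun t : ℝ => -((1 + t) * (‖d‖ ^ 2 / 2)))
      (nhds 1) (nhds (-‖d‖ ^ 2)) := by
    have h2 : -‖d‖ ^ 2 = -((1 + 1) * (‖d‖ ^ 2 / 2)) := by ring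
    rw [h2]
    exact (((continuous_const.add continuous_id).mul continuous_const).neg).tendsto 1
  have hle : M ≤ -‖d‖ ^ 2 := by
    refine ge_of_tendsto (htendlt.mono_left (nhdsWithin_le_nhds (s := Set.Iio 1))) ?_
    filter_upwards [self_mem_nhdsWithin,
      ((eventually_gt_nhds one_pos).filter_mono (nhdsWithin_le_nhds))] with t ht1 ht0
    have h := key t ht0.le
    have h1t : 0 < 1 - t := by simpa using ht1
    nlinarith [h]
  have hge : -‖d‖ ^ 2 ≤ M := by
    refine le_of_tendsto (htendlt.mono_left (nhdsWithin_le_nhds (s := Set.Ioi 1))) ?_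
    filter_upwards [self_mem_nhdsWithin] with t ht1
    have ht1 : (1 : ℝ) < t := ht1
    have h := key t (by linarith)
    nlinarith [h]
  linarith

theorem stmt_14 {n m : ℕ} (hm : 0 < m) (F : Fin m → EuclideanSpace ℝ (Fin n) → ℝ)
    (hF : ∀ i, ContDiff ℝ 1 (F i)) (L : ℝ) (hL : 0 < L)
    (x : EuclideanSpace ℝ (Fin n))
    (α : Fin m → ℝ) (hα : ∀ i, 0 < α i ∧ α i ≤ L)
    (dBB dx : EuclideanSpace ℝ (Fin n))
    (hdBB : ∀ d' : EuclideanSpace ℝ (Fin n),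
      phi (fun i => (α i)⁻¹ • gradient (F i) x) dBB ≤
        phi (fun i => (α i)⁻¹ • gradient (F i) x) d')
    (hdx : ∀ d' : EuclideanSpace ℝ (Fin n),
      phi (fun i => gradient (F i) x) dx ≤ phi (fun i => gradient (F i) x) d') :
    ‖dBB‖ ≥ (1 / L) * ‖dx‖ := by
  have : Nonempty (Fin m) := ⟨⟨0, hm⟩⟩
  set g : Fin m → EuclideanSpace ℝ (Fin n) := fun i => gradient (F i) x with hg
  -- facts from the two minimizers
  have hBBsup : (⨆ i, ⟪(α i)⁻¹ • g i, dBB⟫) = -‖dBB‖ ^ 2 :=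
    iSup_eq_neg_norm_sq hm _ _ hdBB
  have hxsup : (⨆ i, ⟪g i, dx⟫) = -‖dx‖ ^ 2 :=
    iSup_eq_neg_norm_sq hm _ _ hdx
  -- each inner product with dx is ≤ -‖dx‖² ≤ 0
  have hbdd : BddAbove (Set.range fun i => ⟪g i, dx⟫) := Set.Finite.bddAbove (Set.finite_range _)
  have heach : ∀ i, ⟪g i, dx⟫ ≤ -‖dx‖ ^ 2 := fun i => hxsup ▸ le_ciSup hbdd i
  -- compare phi_A(dBB) with phi_A((1/L) • dx)
  have hcomp := hdBB ((1 / L) • dx)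
  have hphiBB : phi (fun i => (α i)⁻¹ • g i) dBB = -‖dBB‖ ^ 2 + ‖dBB‖ ^ 2 / 2 := by
    unfold phi; rw [hBBsup]
  have hsupL : (⨆ i, ⟪(α i)⁻¹ • g i, (1 / L) • dx⟫) ≤ (1 / L ^ 2) * (-‖dx‖ ^ 2) := by
    apply ciSup_le
    intro i
    rw [real_inner_smul_left, real_inner_smul_right]
    have hαi := hα i
    have h1 : ⟪g i, dx⟫ ≤ 0 := le_trans (heach i) (neg_nonpos.mpr (by positivity))
    have h2 : (1 : ℝ) / L ≤ (α i)⁻¹ := by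
      rw [div_le_iff₀ hL, inv_mul_eq_div, le_div_iff₀ hαi.1]
      linarith [hαi.2]
    have h3 : (α i)⁻¹ * ⟪g i, dx⟫ ≤ (1 / L) * ⟪g i, dx⟫ :=
      mul_le_mul_of_nonpos_right h2 h1
    have h4 : (1 / L) * ⟪g i, dx⟫ ≤ (1 / L) * (-‖dx‖ ^ 2) := by
      apply mul_le_mul_of_nonneg_left (heach i) (by positivity)
    have hre : (α i)⁻¹ * ((1 / L) * ⟪g i, dx⟫) = (1 / L) * ((α i)⁻¹ * ⟪g i, dx⟫) := by ring
    rw [hre]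
    calc (1 / L) * ((α i)⁻¹ * ⟪g i, dx⟫) ≤ (1 / L) * ((1 / L) * ⟪g i, dx⟫) := by
          apply mul_le_mul_of_nonneg_left h3 (by positivity)
      _ ≤ (1 / L) * ((1 / L) * (-‖dx‖ ^ 2)) := by
          apply mul_le_mul_of_nonneg_left h4 (by positivity)
      _ = (1 / L ^ 2) * (-‖dx‖ ^ 2) := by ring
  have hnorm : ‖(1 / L) • dx‖ ^ 2 = (1 / L ^ 2) * ‖dx‖ ^ 2 := by
    rw [norm_smul, mul_pow, Real.norm_eq_abs, sq_abs]
    field_simp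
  have hphiL : phi (fun i => (α i)⁻¹ • g i) ((1 / L) • dx) ≤
      (1 / L ^ 2) * (-‖dx‖ ^ 2) + (1 / L ^ 2) * ‖dx‖ ^ 2 / 2 := by
    unfold phi
    rw [hnorm]
    linarith [hsupL]
  have hfinal : ‖dx‖ ^ 2 / L ^ 2 ≤ ‖dBB‖ ^ 2 := by
    rw [hphiBB] at hcomp
    have h := le_trans hcomp hphiL
    have hL2 : (0:ℝ) < L ^ 2 := by positivity
    have hL2' : (1 / L ^ 2) * L ^ 2 = 1 := by field_simp
    rw [div_le_iff₀ hL2]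
    nlinarith [mul_le_mul_of_nonneg_right h hL2.le, hL2']
  have h1 : ((1 / L) * ‖dx‖) ^ 2 ≤ ‖dBB‖ ^ 2 := by
    rw [mul_pow]
    calc (1 / L) ^ 2 * ‖dx‖ ^ 2 = ‖dx‖ ^ 2 / L ^ 2 := by ring
      _ ≤ ‖dBB‖ ^ 2 := hfinal
  have hnn : (0 : ℝ) ≤ (1 / L) * ‖dx‖ := by positivity
  exact (pow_le_pow_iff_left₀ hnn (norm_nonneg _) two_ne_zero).mp h1
end

section
/- Let F : ℝⁿ → ℝᵐ be continuously differentiable and let L > 0. Suppose (x^k) is a sequence in ℝⁿ converging to x*, and for each k there are weights α^k_1,…,α^k_m ∈ (0, L] such that d^k is the Barzilai–Borwein descent direction at x^k for the weights α^k_1,…,α^k_m. If d^k → 0, then x* is Pareto critical. -/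
open scoped RealInnerProductSpace

set_option maxHeartbeats 2000000 in
theorem stmt_15 {n m : ℕ} (hm : 0 < m) (F : Fin m → EuclideanSpace ℝ (Fin n) → ℝ)
    (hF : ∀ i, ContDiff ℝ 1 (F i)) (L : ℝ) (hL : 0 < L)
    (x : ℕ → EuclideanSpace ℝ (Fin n)) (xstar : EuclideanSpace ℝ (Fin n))
    (hx : Filter.Tendsto x Filter.atTop (nhds xstar))
    (α : ℕ → Fin m → ℝ) (hα : ∀ k i, 0 < α k i ∧ α k i ≤ L)
    (d : ℕ → EuclideanSpace ℝ (Fin n))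
    (hd : ∀ k, ∀ d' : EuclideanSpace ℝ (Fin n),
      phi (fun i => (α k i)⁻¹ • gradient (F i) (x k)) (d k) ≤
        phi (fun i => (α k i)⁻¹ • gradient (F i) (x k)) d')
    (hd0 : Filter.Tendsto d Filter.atTop (nhds 0)) :
    ParetoCritical F xstar := by
  rintro ⟨d', hd'⟩
  haveI : Nonempty (Fin m) := ⟨⟨0, hm⟩⟩
  -- continuity of gradients
  have hgc : ∀ i, Filter.Tendsto (fun k => gradient (F i) (x k)) Filter.atTop
      (nhds (gradient (F i) xstar)) := by
    intro i
    have hc : Continuous (gradient (F i)) := by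
      unfold gradient
      exact (LinearIsometryEquiv.continuous _).comp ((hF i).continuous_fderiv one_ne_zero)
    exact (hc.tendsto xstar).comp hx
  -- a uniform negative bound at xstar
  set s : ℝ := Finset.univ.sup' Finset.univ_nonempty
      (fun i => ⟪gradient (F i) xstar, d'⟫) with hs
  have hs_neg : s < 0 := by
    rw [hs, Finset.sup'_lt_iff]
    exact fun i _ => hd' i
  set ε : ℝ := -s / 2 with hεdef
  have hε : 0 < ε := by simp only [hεdef]; linarith
  have hεle : ∀ i, ⟪gradient (F i) xstar, d'⟫ ≤ -(2 * ε) := by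
    intro i
    have : ⟪gradient (F i) xstar, d'⟫ ≤ s :=
      Finset.le_sup' (fun i => ⟪gradient (F i) xstar, d'⟫) (Finset.mem_univ i)
    simp only [hεdef]; linarith
  -- a bound on gradient norms
  set G : ℝ := Finset.univ.sup' Finset.univ_nonempty
      (fun i => ‖gradient (F i) xstar‖) + 1 with hGdef
  have hG : 0 < G := by
    have : (0:ℝ) ≤ Finset.univ.sup' Finset.univ_nonempty
        (fun i => ‖gradient (F i) xstar‖) := by
      obtain ⟨i⟩ := (inferInstance : Nonempty (Fin m))
      exact le_trans (norm_nonneg _)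
        (Finset.le_sup' (fun i => ‖gradient (F i) xstar‖) (Finset.mem_univ i))
    simp only [hGdef]; linarith
  have hGi : ∀ i, ‖gradient (F i) xstar‖ < G := by
    intro i
    have : ‖gradient (F i) xstar‖ ≤ Finset.univ.sup' Finset.univ_nonempty
        (fun i => ‖gradient (F i) xstar‖) :=
      Finset.le_sup' (fun i => ‖gradient (F i) xstar‖) (Finset.mem_univ i)
    simp only [hGdef]; linarith
  -- d' ≠ 0
  have hd'0 : 0 < ‖d'‖ := by
    rcases eq_or_ne d' 0 with h | h
    · exfalso
      have := hd' ⟨0, hm⟩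
      rw [h, inner_zero_right] at this
      exact lt_irrefl _ this
    · exact norm_pos_iff.2 h
  -- constants
  set μ : ℝ := ε / (L * ‖d'‖) with hμdef
  have hμ : 0 < μ := by positivity
  set q : ℝ := ε / G with hqdef
  have hq : 0 < q := by positivity
  have hqG : q * G = ε := by rw [hqdef]; exact div_mul_cancel₀ ε hG.ne'
  set t : ℝ := q * μ / ‖d'‖ ^ 2 with htdef
  have ht : 0 < t := by positivity
  have ht2 : t * ‖d'‖ ^ 2 = q * μ := by rw [htdef]; exact div_mul_cancel₀ _ (by positivity)
  set δ : ℝ := t * q / 2 with hδdef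
  have hδ : 0 < δ := by positivity
  -- eventual bounds
  have hev1 : ∀ᶠ k in Filter.atTop, ∀ i, ⟪gradient (F i) (x k), d'⟫ ≤ -ε := by
    rw [Filter.eventually_all]
    intro i
    have htd : Filter.Tendsto (fun k => ⟪gradient (F i) (x k), d'⟫) Filter.atTop
        (nhds ⟪gradient (F i) xstar, d'⟫) :=
      ((continuous_id.inner continuous_const).tendsto _).comp (hgc i)
    have := htd.eventually_lt_const (show ⟪gradient (F i) xstar, d'⟫ < -ε by
      have := hεle i; linarith)
    exact this.mono fun k hk => le_of_lt hk
  have hev2 : ∀ᶠ k in Filter.atTop, ∀ i, ‖gradient (F i) (x k)‖ ≤ G := by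
    rw [Filter.eventually_all]
    intro i
    exact ((hgc i).norm.eventually_lt_const (hGi i)).mono fun k hk => le_of_lt hk
  have hev3 : ∀ᶠ k in Filter.atTop, ‖d k‖ < δ := by
    have : Filter.Tendsto (fun k => ‖d k‖) Filter.atTop (nhds 0) := by
      simpa using hd0.norm
    exact this.eventually_lt_const hδ
  obtain ⟨k, ⟨hk1, hk2⟩, hk3⟩ := ((hev1.and hev2).and hev3).exists
  -- fixed k analysis
  set g : Fin m → EuclideanSpace ℝ (Fin n) :=
    fun i => (α k i)⁻¹ • gradient (F i) (x k) with hgdef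
  have hαpos : ∀ i, 0 < (α k i)⁻¹ := fun i => inv_pos.2 (hα k i).1
  have hαL : ∀ i, L⁻¹ ≤ (α k i)⁻¹ := fun i =>
    inv_anti₀ (hα k i).1 (hα k i).2
  have hng : ∀ i, ‖g i‖ = (α k i)⁻¹ * ‖gradient (F i) (x k)‖ := by
    intro i
    rw [show g i = (α k i)⁻¹ • gradient (F i) (x k) from rfl, norm_smul,
      Real.norm_eq_abs, abs_of_pos (hαpos i)]
  have hgrad_lb : ∀ i, ε / ‖d'‖ ≤ ‖gradient (F i) (x k)‖ := by
    intro i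
    have h1 := hk1 i
    have h2 := abs_real_inner_le_norm (gradient (F i) (x k)) d'
    have h3 := neg_abs_le ⟪gradient (F i) (x k), d'⟫
    rw [div_le_iff₀ hd'0]
    nlinarith
  have hμ_le : ∀ i, μ ≤ ‖g i‖ := by
    intro i
    rw [hng i, hμdef]
    have h1 := hgrad_lb i
    have h2 := hαL i
    have h3 := hαpos i
    have h4 : ε / (L * ‖d'‖) = L⁻¹ * (ε / ‖d'‖) := by
      field_simp
    rw [h4]
    have h5 : (0:ℝ) < ε / ‖d'‖ := by positivity
    nlinarith
  set ν : ℝ := Finset.univ.inf' Finset.univ_nonempty (fun i => ‖g i‖) with hνdef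
  have hνμ : μ ≤ ν := Finset.le_inf' _ _ fun i _ => hμ_le i
  have hν : 0 < ν := lt_of_lt_of_le hμ hνμ
  obtain ⟨j, -, hj⟩ := Finset.exists_mem_eq_inf' Finset.univ_nonempty
      (fun i => ‖g i‖)
  have hν_le : ∀ i, ν ≤ ‖g i‖ := fun i => Finset.inf'_le _ (Finset.mem_univ i)
  -- key inner product bound
  have hC : ∀ i, ⟪g i, d'⟫ ≤ -(q * ν) := by
    intro i
    have h1 : ⟪g i, d'⟫ = (α k i)⁻¹ * ⟪gradient (F i) (x k), d'⟫ := by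
      rw [hgdef]; exact real_inner_smul_left _ _ _
    have h2 := hk1 i
    have h3 := hαpos i
    have h4 : ν ≤ (α k i)⁻¹ * ‖gradient (F i) (x k)‖ := by
      rw [← hng i]; exact hν_le i
    have h5 := hk2 i
    -- q * ν ≤ q * α⁻¹ * ‖grad‖ ≤ q * α⁻¹ * G = α⁻¹ * ε ≤ -⟪g i, d'⟫
    have hA : q * ν ≤ (α k i)⁻¹ * ε := by
      calc q * ν ≤ q * ((α k i)⁻¹ * ‖gradient (F i) (x k)‖) :=
            mul_le_mul_of_nonneg_left h4 hq.le
        _ ≤ q * ((α k i)⁻¹ * G) := by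
            apply mul_le_mul_of_nonneg_left _ hq.le
            exact mul_le_mul_of_nonneg_left h5 h3.le
        _ = (α k i)⁻¹ * (q * G) := by ring
        _ = (α k i)⁻¹ * ε := by rw [hqG]
    have hB : (α k i)⁻¹ * ⟪gradient (F i) (x k), d'⟫ ≤ (α k i)⁻¹ * (-ε) :=
      mul_le_mul_of_nonneg_left h2 h3.le
    rw [h1]
    linarith
  -- upper bound for phi at t • d'
  have hub : phi g (t • d') ≤ t * (-(q * ν)) + t ^ 2 * ‖d'‖ ^ 2 / 2 := by
    unfold phi
    have hsup : (⨆ i, ⟪g i, t • d'⟫) ≤ t * (-(q * ν)) := by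
      apply ciSup_le
      intro i
      rw [real_inner_smul_right]
      exact mul_le_mul_of_nonneg_left (hC i) (le_of_lt ht)
    have hnorm : ‖t • d'‖ ^ 2 = t ^ 2 * ‖d'‖ ^ 2 := by
      rw [norm_smul, mul_pow, Real.norm_eq_abs, sq_abs]
    rw [hnorm]
    linarith
  -- lower bound for phi at d k
  have hlb : -(ν * ‖d k‖) ≤ phi g (d k) := by
    unfold phi
    have h1 : ⟪g j, d k⟫ ≤ ⨆ i, ⟪g i, d k⟫ :=
      le_ciSup (f := fun i => (⟪g i, d k⟫ : ℝ))
        (Set.Finite.bddAbove (Set.finite_range _)) j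
    have h2 := abs_real_inner_le_norm (g j) (d k)
    have h3 := neg_abs_le ⟪g j, d k⟫
    have h4 : ‖g j‖ = ν := hj.symm
    have h5 : (0:ℝ) ≤ ‖d k‖ ^ 2 / 2 := by positivity
    nlinarith
  have key := hd k (t • d')
  have hcomb : -(ν * ‖d k‖) ≤ t * (-(q * ν)) + t ^ 2 * ‖d'‖ ^ 2 / 2 :=
    le_trans hlb (le_trans key hub)
  have ht3 : t ^ 2 * ‖d'‖ ^ 2 = t * (q * μ) := by
    rw [← ht2]; ring
  rw [ht3] at hcomb
  -- derive contradiction: ‖d k‖ ≥ t * q / 2 = δ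
  have hfinal : δ ≤ ‖d k‖ := by
    rw [hδdef]
    have h1 : t * (q * μ) ≤ t * (q * ν) :=
      mul_le_mul_of_nonneg_left (mul_le_mul_of_nonneg_left hνμ (le_of_lt hq)) (le_of_lt ht)
    -- -(ν ‖d k‖) ≤ -t q ν + t q ν / 2 = - t q ν /2
    have h2 : t * q * ν / 2 ≤ ν * ‖d k‖ := by linarith
    rw [div_le_iff₀ (by norm_num : (0:ℝ) < 2)] at h2 ⊢
    nlinarith
  linarith
end

section
/- Let g_1, …, g_m be vectors in ℝⁿ with m ≥ 2, and for k > 0 define N(k) = min_{λ∈Δ_m} ‖Σ_{i=1}^{m−1} λ_i g_i + λ_m · k · g_m‖ and t_k = −N(k)². If 0 < k₁ ≤ k₂, then N(k₁) ≤ N(k₂) and t_{k₁} ≥ t_{k₂}. -/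
open scoped RealInnerProductSpace

/-- `N(k)`: the minimal Euclidean norm over the convex hull of `{g_1, …, g_{m-1}, k • g_m}`,
i.e. `min_{λ ∈ Δ_m} ‖∑_{i=1}^{m-1} λ_i g_i + λ_m k g_m‖`. -/
noncomputable def Nval {n m : ℕ} (g : Fin m → EuclideanSpace ℝ (Fin n)) (k : ℝ) : ℝ :=
  ⨅ lam : stdSimplex ℝ (Fin m),
    ‖∑ i, (lam : Fin m → ℝ) i • (if (i : ℕ) + 1 = m then k • g i else g i)‖

theorem stmt_16 {n m : ℕ} (hm : 2 ≤ m) (g : Fin m → EuclideanSpace ℝ (Fin n))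
    (k₁ k₂ : ℝ) (hk₁ : 0 < k₁) (hk : k₁ ≤ k₂) :
    Nval g k₁ ≤ Nval g k₂ ∧ -(Nval g k₁) ^ 2 ≥ -(Nval g k₂) ^ 2 := by
  have hm0 : 0 < m := by omega
  set j : Fin m := ⟨m - 1, by omega⟩ with hj
  have hcond : ∀ i : Fin m, ((i : ℕ) + 1 = m) ↔ i = j := by
    intro i
    rw [Fin.ext_iff]
    have := i.isLt
    simp only [hj]
    omega
  haveI hne : Nonempty (stdSimplex ℝ (Fin m)) := by
    refine ⟨⟨fun i => if i = j then 1 else 0, ?_, ?_⟩⟩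
    · intro i; dsimp only; split <;> norm_num
    · simp
  have bdd : ∀ k : ℝ, BddBelow (Set.range fun lam : stdSimplex ℝ (Fin m) =>
      ‖∑ i, (lam : Fin m → ℝ) i • (if (i : ℕ) + 1 = m then k • g i else g i)‖) := by
    intro k
    exact ⟨0, by rintro x ⟨lam, rfl⟩; exact norm_nonneg _⟩
  have hN1 : Nval g k₁ ≤ Nval g k₂ := by
    apply le_ciInf
    intro lam
    obtain ⟨hl0, hl1⟩ := lam.2
    set c : ℝ := k₂ / k₁ with hc
    have hc1 : 1 ≤ c := (one_le_div hk₁).mpr hk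
    set l' : Fin m → ℝ := lam.1 with hl'
    set s : ℝ := 1 + l' j * (c - 1) with hs
    have hlj : 0 ≤ l' j := hl0 j
    have hs1 : 1 ≤ s := by nlinarith
    have hs0 : 0 < s := by linarith
    set mu : Fin m → ℝ := fun i => if i = j then l' j * c / s else l' i / s with hmu
    have hmu_mem : mu ∈ stdSimplex ℝ (Fin m) := by
      constructor
      · intro i
        simp only [hmu]
        split
        · positivity
        · exact div_nonneg (hl0 i) hs0.le
      · have heq : ∀ i, mu i = l' i / s + (if i = j then l' j * (c - 1) / s else 0) := by
          intro i
          simp only [hmu]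
          split
          · rename_i h; subst h; ring
          · ring
        rw [Finset.sum_congr rfl (fun i _ => heq i), Finset.sum_add_distrib,
          Finset.sum_ite_eq' Finset.univ j, ← Finset.sum_div, hl1]
        simp only [Finset.mem_univ, if_true]
        field_simp
        exact hs.symm
    have hvec : ∑ i, mu i • (if (i : ℕ) + 1 = m then k₁ • g i else g i)
        = s⁻¹ • ∑ i, l' i • (if (i : ℕ) + 1 = m then k₂ • g i else g i) := by
      rw [Finset.smul_sum]
      refine Finset.sum_congr rfl fun i _ => ?_
      by_cases hij : i = j
      · subst hij
        rw [if_pos ((hcond j).mpr rfl), if_pos ((hcond j).mpr rfl)]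
        simp only [hmu, if_pos rfl]
        rw [smul_smul, smul_smul, smul_smul]
        congr 1
        field_simp
        rw [hc, mul_assoc, div_mul_cancel₀ _ hk₁.ne']
      · rw [if_neg (fun h => hij ((hcond i).mp h)), if_neg (fun h => hij ((hcond i).mp h))]
        simp only [hmu, if_neg hij]
        rw [smul_smul]
        congr 1
        field_simp
    calc Nval g k₁ ≤ ‖∑ i, mu i • (if (i : ℕ) + 1 = m then k₁ • g i else g i)‖ :=
          ciInf_le (bdd k₁) (⟨mu, hmu_mem⟩ : stdSimplex ℝ (Fin m))
      _ = ‖s⁻¹‖ * ‖∑ i, l' i • (if (i : ℕ) + 1 = m then k₂ • g i else g i)‖ := by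
          rw [hvec, norm_smul]
      _ ≤ ‖∑ i, l' i • (if (i : ℕ) + 1 = m then k₂ • g i else g i)‖ := by
          have : ‖s⁻¹‖ ≤ 1 := by
            rw [Real.norm_eq_abs, abs_of_nonneg (by positivity)]
            rw [inv_le_one_iff₀]; right; exact hs1
          nlinarith [norm_nonneg (∑ i, l' i • (if (i : ℕ) + 1 = m then k₂ • g i else g i))]
  have hN0 : 0 ≤ Nval g k₁ := le_ciInf fun lam => norm_nonneg _
  refine ⟨hN1, ?_⟩
  have := pow_le_pow_left₀ hN0 hN1 2
  linarith
end

section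
/- Let F : ℝⁿ → ℝᵐ be continuously differentiable, let σ, γ ∈ (0,1), and let 0 < α_min ≤ α_max. Suppose sequences (x^k) in ℝⁿ, weights (α^k) with α^k_i ∈ [α_min, α_max] for all i and k, directions (d^k), and stepsizes (β^k) satisfy for every k: (i) d^k is the Barzilai–Borwein descent direction at x^k for the weights α^k_1,…,α^k_m and d^k ≠ 0; (ii) β^k is an Armijo backtracking stepsize for direction d^k at x^k with parameters σ, γ; (iii) x^{k+1} = x^k + β^k d^k. If the level set {x ∈ ℝⁿ : F_i(x) ≤ F_i(x^0) for all i ∈ {1,…,m}} is bounded, then every accumulation point of the sequence (x^k) is Pareto critical. -/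
open scoped RealInnerProductSpace

/-- The Armijo condition at stepsize `β` for direction `d` at `x`:
`F_i(x + βd) - F_i(x) ≤ σβ⟨∇F_i(x), d⟩` for every `i`. -/
def ArmijoAt {n m : ℕ} (F : Fin m → EuclideanSpace ℝ (Fin n) → ℝ)
    (x d : EuclideanSpace ℝ (Fin n)) (σ β : ℝ) : Prop :=
  ∀ i, F i (x + β • d) - F i x ≤ σ * β * ⟪gradient (F i) x, d⟫

/-- `β` is an Armijo backtracking stepsize: `β ∈ (0,1]`, the Armijo condition holds at `β`,
and either `β = 1` or the Armijo condition fails (for some index) at `β/γ`. -/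
def ArmijoBacktrack {n m : ℕ} (F : Fin m → EuclideanSpace ℝ (Fin n) → ℝ)
    (x d : EuclideanSpace ℝ (Fin n)) (σ γ β : ℝ) : Prop :=
  0 < β ∧ β ≤ 1 ∧ ArmijoAt F x d σ β ∧ (β = 1 ∨ ¬ ArmijoAt F x d σ (β / γ))

lemma grad_inner_eq {n : ℕ} (f : EuclideanSpace ℝ (Fin n) → ℝ) (x v : EuclideanSpace ℝ (Fin n)) :
    ⟪gradient f x, v⟫ = fderiv ℝ f x v := by
  rw [gradient]; exact InnerProductSpace.toDual_symm_apply

lemma grad_cont {n : ℕ} {f : EuclideanSpace ℝ (Fin n) → ℝ} (hf : ContDiff ℝ 1 f) :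
    Continuous (fun x => gradient f x) :=
  (InnerProductSpace.toDual ℝ _).symm.continuous.comp (hf.continuous_fderiv one_ne_zero)

lemma hasDerivAt_line {n : ℕ} {f : EuclideanSpace ℝ (Fin n) → ℝ} (hf : ContDiff ℝ 1 f)
    (x d : EuclideanSpace ℝ (Fin n)) (s : ℝ) :
    HasDerivAt (fun t : ℝ => f (x + t • d)) ⟪gradient f (x + s • d), d⟫ s := by
  have h1 : HasDerivAt (fun t : ℝ => x + t • d) d s := by
    simpa using ((hasDerivAt_id s).smul_const d).const_add x
  have h2 := ((hf.differentiable one_ne_zero) (x + s • d)).hasFDerivAt.comp_hasDerivAt s h1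
  rw [grad_inner_eq]
  exact h2

lemma mvt_line {n : ℕ} {f : EuclideanSpace ℝ (Fin n) → ℝ} (hf : ContDiff ℝ 1 f)
    (x d : EuclideanSpace ℝ (Fin n)) {t : ℝ} (ht : 0 < t) :
    ∃ s ∈ Set.Ioo (0:ℝ) t, f (x + t • d) - f x = t * ⟪gradient f (x + s • d), d⟫ := by
  obtain ⟨c, hc, heq⟩ := exists_hasDerivAt_eq_slope (fun r : ℝ => f (x + r • d))
    (fun r : ℝ => ⟪gradient f (x + r • d), d⟫) ht
    (Continuous.continuousOn (by
      exact (hf.continuous).comp (continuous_const.add (continuous_id.smul continuous_const))))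
    (fun r _ => hasDerivAt_line hf x d r)
  refine ⟨c, hc, ?_⟩
  rw [heq]
  simp
  field_simp

lemma phi_key {n m : ℕ} (hm : 0 < m) (g : Fin m → EuclideanSpace ℝ (Fin n))
    (dk : EuclideanSpace ℝ (Fin n)) (hmin : phi g dk ≤ phi g 0) (i : Fin m) :
    ⟪g i, dk⟫ ≤ -(‖dk‖^2/2) := by
  haveI : Nonempty (Fin m) := ⟨⟨0, hm⟩⟩
  have h0 : phi g 0 = 0 := by simp [phi]
  have hb : BddAbove (Set.range fun j => ⟪g j, dk⟫) := (Set.finite_range _).bddAbove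
  have h1 := le_ciSup hb i
  have h2 : (⨆ j, ⟪g j, dk⟫) + ‖dk‖^2/2 ≤ 0 := by rw [h0] at hmin; exact hmin
  linarith

set_option maxHeartbeats 2000000 in
theorem stmt_18 {n m : ℕ} (hm : 0 < m) (F : Fin m → EuclideanSpace ℝ (Fin n) → ℝ)
    (hF : ∀ i, ContDiff ℝ 1 (F i))
    (σ γ : ℝ) (hσ : σ ∈ Set.Ioo (0 : ℝ) 1) (hγ : γ ∈ Set.Ioo (0 : ℝ) 1)
    (αmin αmax : ℝ) (hαmin : 0 < αmin) (hαminmax : αmin ≤ αmax)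
    (x : ℕ → EuclideanSpace ℝ (Fin n)) (α : ℕ → Fin m → ℝ)
    (hα : ∀ k i, α k i ∈ Set.Icc αmin αmax)
    (d : ℕ → EuclideanSpace ℝ (Fin n)) (β : ℕ → ℝ)
    (hd : ∀ k, (∀ d' : EuclideanSpace ℝ (Fin n),
      phi (fun i => (α k i)⁻¹ • gradient (F i) (x k)) (d k) ≤
        phi (fun i => (α k i)⁻¹ • gradient (F i) (x k)) d') ∧ d k ≠ 0)
    (hβ : ∀ k, ArmijoBacktrack F (x k) (d k) σ γ (β k))
    (hstep : ∀ k, x (k + 1) = x k + β k • d k)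
    (hlevel : Bornology.IsBounded
      {y : EuclideanSpace ℝ (Fin n) | ∀ i, F i y ≤ F i (x 0)}) :
    ∀ xstar : EuclideanSpace ℝ (Fin n),
      MapClusterPt xstar Filter.atTop x → ParetoCritical F xstar := by
  obtain ⟨hσ0, hσ1⟩ := hσ
  obtain ⟨hγ0, hγ1⟩ := hγ
  haveI : Nonempty (Fin m) := ⟨⟨0, hm⟩⟩
  set i0 : Fin m := ⟨0, hm⟩ with hi0
  have hαmax : 0 < αmax := lt_of_lt_of_le hαmin hαminmax
  -- Step 1 : descent property of the BB direction
  have key : ∀ k i, ⟪gradient (F i) (x k), d k⟫ ≤ -(αmin * ‖d k‖^2/2) := by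
    intro k i
    have hai := hα k i
    have hapos : 0 < α k i := lt_of_lt_of_le hαmin hai.1
    have h1 := phi_key hm _ _ ((hd k).1 0) i
    rw [real_inner_smul_left] at h1
    have h2 := mul_le_mul_of_nonneg_left h1 hapos.le
    rw [← mul_assoc, mul_inv_cancel₀ hapos.ne', one_mul] at h2
    nlinarith [sq_nonneg ‖d k‖, hai.1]
  -- Step 2 : monotonicity along the iterates
  have hdec : ∀ i k, F i (x (k+1)) ≤ F i (x k) := by
    intro i k
    have ha := (hβ k).2.2.1 i
    rw [← hstep k] at ha
    have hb0 := (hβ k).1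
    have hkey := key k i
    have hinneg : ⟪gradient (F i) (x k), d k⟫ ≤ 0 := by nlinarith [sq_nonneg ‖d k‖]
    have h5 : σ * β k * ⟪gradient (F i) (x k), d k⟫ ≤ 0 :=
      mul_nonpos_of_nonneg_of_nonpos (mul_nonneg hσ0.le hb0.le) hinneg
    linarith
  have hanti : ∀ i, Antitone fun k => F i (x k) :=
    fun i => antitone_nat_of_succ_le (fun k => hdec i k)
  have hbdd : ∀ i, BddBelow (Set.range fun k => F i (x k)) := by
    intro i
    have hcomp : IsCompact (closure {y : EuclideanSpace ℝ (Fin n) | ∀ i, F i y ≤ F i (x 0)}) :=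
      hlevel.isCompact_closure
    have himg : IsCompact ((F i) '' closure {y | ∀ i, F i y ≤ F i (x 0)}) :=
      hcomp.image (hF i).continuous
    refine himg.bddBelow.mono ?_
    rintro _ ⟨k, rfl⟩
    exact ⟨x k, subset_closure (fun j => hanti j (Nat.zero_le k)), rfl⟩
  have hconv : ∀ i, Filter.Tendsto (fun k => F i (x k)) Filter.atTop (nhds (⨅ k, F i (x k))) :=
    fun i => tendsto_atTop_ciInf (hanti i) (hbdd i)
  have hdiff0 : Filter.Tendsto (fun k => F i0 (x k) - F i0 (x (k+1))) Filter.atTop (nhds 0) := by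
    have h2 : Filter.Tendsto (fun k => F i0 (x (k+1))) Filter.atTop (nhds (⨅ k, F i0 (x k))) :=
      (hconv i0).comp (Filter.tendsto_add_atTop_nat 1)
    simpa using (hconv i0).sub h2
  -- Step 3 : β k * ‖d k‖² → 0
  have hbd0 : Filter.Tendsto (fun k => β k * ‖d k‖^2) Filter.atTop (nhds 0) := by
    have hub : ∀ k, β k * ‖d k‖^2 ≤ 2/(σ*αmin) * (F i0 (x k) - F i0 (x (k+1))) := by
      intro k
      have ha := (hβ k).2.2.1 i0
      rw [← hstep k] at ha
      have hkey := key k i0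
      have hb0 := (hβ k).1
      have hmid : σ*αmin/2 * (β k * ‖d k‖^2) ≤ F i0 (x k) - F i0 (x (k+1)) := by
        nlinarith [mul_le_mul_of_nonneg_left hkey (by positivity : (0:ℝ) ≤ σ * β k)]
      calc β k * ‖d k‖^2 = 2/(σ*αmin) * (σ*αmin/2 * (β k * ‖d k‖^2)) := by
            field_simp
          _ ≤ 2/(σ*αmin) * (F i0 (x k) - F i0 (x (k+1))) := by
            apply mul_le_mul_of_nonneg_left hmid (by positivity)
    refine squeeze_zero (fun k => mul_nonneg (hβ k).1.le (sq_nonneg _)) hub ?_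
    simpa using hdiff0.const_mul (2/(σ*αmin))
  -- Step 4 : main argument
  intro xstar hcl hcontra
  obtain ⟨u, hu⟩ := hcontra
  obtain ⟨φ, hφm, hφt⟩ := TopologicalSpace.FirstCountableTopology.tendsto_subseq hcl
  have hu0 : u ≠ 0 := by
    intro h
    have := hu i0
    rw [h, inner_zero_right] at this
    exact lt_irrefl 0 this
  have hunorm : (0:ℝ) < ‖u‖ := norm_pos_iff.mpr hu0
  obtain ⟨ε, hεpos, hε⟩ : ∃ ε > 0, ∀ i, ⟪gradient (F i) xstar, u⟫ ≤ -ε := by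
    obtain ⟨i1, _, hmax⟩ := Finset.exists_mem_eq_sup' (Finset.univ_nonempty)
      (fun i => ⟪gradient (F i) xstar, u⟫)
    refine ⟨-(Finset.univ.sup' Finset.univ_nonempty fun i => ⟪gradient (F i) xstar, u⟫),
      by rw [hmax]; linarith [hu i1], fun i => ?_⟩
    have := Finset.le_sup' (fun i => ⟪gradient (F i) xstar, u⟫) (Finset.mem_univ i)
    linarith
  have hgradtend : ∀ i, Filter.Tendsto (fun j => gradient (F i) (x (φ j))) Filter.atTop
      (nhds (gradient (F i) xstar)) :=
    fun i => ((grad_cont (hF i)).tendsto xstar).comp hφt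
  set Gn : ℝ := ‖gradient (F i0) xstar‖ + 1 with hGndef
  have hGn : 0 < Gn := by positivity
  have hev1 : ∀ᶠ j in Filter.atTop, ∀ i, ⟪gradient (F i) (x (φ j)), u⟫ < -(ε/2) := by
    rw [Filter.eventually_all]
    intro i
    have h1 : Filter.Tendsto (fun j => ⟪gradient (F i) (x (φ j)), u⟫) Filter.atTop
        (nhds ⟪gradient (F i) xstar, u⟫) := (hgradtend i).inner tendsto_const_nhds
    exact h1.eventually_lt_const (by linarith [hε i])
  have hev2 : ∀ᶠ j in Filter.atTop, ‖gradient (F i0) (x (φ j))‖ ≤ Gn :=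
    (hgradtend i0).norm.eventually_le_const (by simp [hGndef])
  set c : ℝ := ε^2/(8*αmax^2*‖u‖^2) with hcdef
  have hcpos : 0 < c := by positivity
  set t0 : ℝ := ε/(2*αmax*‖u‖^2) with ht0def
  have ht0 : 0 < t0 := by positivity
  have hphi : ∀ j, (∀ i, ⟪gradient (F i) (x (φ j)), u⟫ < -(ε/2)) →
      phi (fun i => (α (φ j) i)⁻¹ • gradient (F i) (x (φ j))) (d (φ j)) ≤ -c := by
    intro j hj
    refine le_trans ((hd (φ j)).1 (t0 • u)) ?_
    have hsup : (⨆ i, ⟪(α (φ j) i)⁻¹ • gradient (F i) (x (φ j)), t0 • u⟫)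
        ≤ t0 * (-(ε/2)) / αmax := by
      apply ciSup_le
      intro i
      rw [real_inner_smul_left, real_inner_smul_right]
      have hai := hα (φ j) i
      have hapos : 0 < α (φ j) i := lt_of_lt_of_le hαmin hai.1
      have h1 : ⟪gradient (F i) (x (φ j)), u⟫ ≤ -(ε/2) := (hj i).le
      calc (α (φ j) i)⁻¹ * (t0 * ⟪gradient (F i) (x (φ j)), u⟫)
          ≤ (α (φ j) i)⁻¹ * (t0 * (-(ε/2))) := by
            apply mul_le_mul_of_nonneg_left _ (inv_nonneg.mpr hapos.le)
            exact mul_le_mul_of_nonneg_left h1 ht0.le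
        _ ≤ αmax⁻¹ * (t0 * (-(ε/2))) := by
            apply mul_le_mul_of_nonpos_right (inv_anti₀ hapos hai.2)
            nlinarith
        _ = t0 * (-(ε/2)) / αmax := by ring
    have hnorm : ‖t0 • u‖^2 = t0^2 * ‖u‖^2 := by
      rw [norm_smul, Real.norm_eq_abs, abs_of_pos ht0, mul_pow]
    have hid : t0 * (-(ε/2))/αmax + t0^2*‖u‖^2/2 = -c := by
      rw [ht0def, hcdef]
      field_simp
      ring
    calc phi (fun i => (α (φ j) i)⁻¹ • gradient (F i) (x (φ j))) (t0 • u)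
        = (⨆ i, ⟪(α (φ j) i)⁻¹ • gradient (F i) (x (φ j)), t0 • u⟫) + ‖t0 • u‖^2/2 := rfl
      _ ≤ t0 * (-(ε/2))/αmax + t0^2*‖u‖^2/2 := by rw [hnorm]; linarith
      _ = -c := hid
  set δ₁ : ℝ := c * αmin / Gn with hδ₁def
  set D : ℝ := 2 * Gn / αmin with hDdef
  have hδ₁ : 0 < δ₁ := by positivity
  have hDpos : 0 < D := by positivity
  have hev3 : ∀ᶠ j in Filter.atTop, δ₁ ≤ ‖d (φ j)‖ ∧ ‖d (φ j)‖ ≤ D := by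
    filter_upwards [hev1, hev2] with j h1 h2
    have hp := hphi j h1
    have hsup_le : (⨆ i, ⟪(α (φ j) i)⁻¹ • gradient (F i) (x (φ j)), d (φ j)⟫)
        ≤ -c - ‖d (φ j)‖^2/2 := by
      have : phi (fun i => (α (φ j) i)⁻¹ • gradient (F i) (x (φ j))) (d (φ j))
          = (⨆ i, ⟪(α (φ j) i)⁻¹ • gradient (F i) (x (φ j)), d (φ j)⟫) + ‖d (φ j)‖^2/2 := rfl
      rw [this] at hp
      linarith
    have hsup_ge : -(Gn/αmin * ‖d (φ j)‖)
        ≤ ⨆ i, ⟪(α (φ j) i)⁻¹ • gradient (F i) (x (φ j)), d (φ j)⟫ := by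
      refine le_trans ?_ (le_ciSup ((Set.finite_range _).bddAbove) i0)
      rw [real_inner_smul_left]
      have hai := hα (φ j) i0
      have hapos : 0 < α (φ j) i0 := lt_of_lt_of_le hαmin hai.1
      have hcs : -(‖gradient (F i0) (x (φ j))‖ * ‖d (φ j)‖)
          ≤ ⟪gradient (F i0) (x (φ j)), d (φ j)⟫ := by
        have := abs_real_inner_le_norm (gradient (F i0) (x (φ j))) (d (φ j))
        have := abs_le.mp this
        linarith [this.1]
      have hinv1 : (α (φ j) i0)⁻¹ ≤ αmin⁻¹ := inv_anti₀ hαmin hai.1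
      have hinvpos : 0 < (α (φ j) i0)⁻¹ := inv_pos.mpr hapos
      have hgd : -(Gn * ‖d (φ j)‖) ≤ ⟪gradient (F i0) (x (φ j)), d (φ j)⟫ := by
        refine le_trans ?_ hcs
        nlinarith [norm_nonneg (d (φ j))]
      calc -(Gn/αmin * ‖d (φ j)‖) = αmin⁻¹ * (-(Gn * ‖d (φ j)‖)) := by ring
        _ ≤ (α (φ j) i0)⁻¹ * (-(Gn * ‖d (φ j)‖)) := by
            apply mul_le_mul_of_nonpos_right hinv1
            nlinarith [norm_nonneg (d (φ j))]
        _ ≤ (α (φ j) i0)⁻¹ * ⟪gradient (F i0) (x (φ j)), d (φ j)⟫ :=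
            mul_le_mul_of_nonneg_left hgd hinvpos.le
    have hmain : c + ‖d (φ j)‖^2/2 ≤ Gn/αmin * ‖d (φ j)‖ := by linarith
    have hr : 0 < Gn/αmin := by positivity
    constructor
    · rw [hδ₁def, div_le_iff₀ hGn]
      have h5 : c ≤ Gn/αmin * ‖d (φ j)‖ := by nlinarith [sq_nonneg ‖d (φ j)‖]
      have h6 := mul_le_mul_of_nonneg_right h5 hαmin.le
      have h7 : Gn/αmin * ‖d (φ j)‖ * αmin = ‖d (φ j)‖ * Gn := by
        field_simp
      rw [← h7]
      exact h6
    · rcases eq_or_lt_of_le (norm_nonneg (d (φ j))) with h0 | h0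
      · rw [hDdef, ← h0]
        positivity
      · have h8 : ‖d (φ j)‖ * ‖d (φ j)‖ ≤ (2*(Gn/αmin)) * ‖d (φ j)‖ := by nlinarith
        have h9 := le_of_mul_le_mul_right h8 h0
        rw [hDdef, mul_div_assoc]
        exact h9
  have hβφ : Filter.Tendsto (fun j => β (φ j)) Filter.atTop (nhds 0) := by
    have h1 : Filter.Tendsto (fun j => β (φ j) * ‖d (φ j)‖^2) Filter.atTop (nhds 0) :=
      hbd0.comp hφm.tendsto_atTop
    refine squeeze_zero' (Filter.Eventually.of_forall fun j => (hβ (φ j)).1.le) ?_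
      (by simpa using h1.const_mul (δ₁^2)⁻¹)
    filter_upwards [hev3] with j hj
    have hsq : δ₁^2 ≤ ‖d (φ j)‖^2 := by nlinarith [hj.1, hδ₁]
    have hb := (hβ (φ j)).1
    rw [le_inv_mul_iff₀ (by positivity)]
    nlinarith
  set δ : ℝ := αmin * δ₁^2/2 with hδdef
  have hδpos : 0 < δ := by positivity
  set θ : ℝ := (1-σ)*δ/(2*D) with hθdef
  have hθpos : 0 < θ := by
    have : 0 < 1 - σ := by linarith
    positivity
  have hUC : ∀ i, ∃ η > 0, ∀ a ∈ Metric.closedBall xstar 1, ∀ b ∈ Metric.closedBall xstar 1,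
      dist a b < η → dist (gradient (F i) a) (gradient (F i) b) < θ := by
    intro i
    have h1 := (isCompact_closedBall xstar 1).uniformContinuousOn_of_continuous
      (grad_cont (hF i)).continuousOn
    rw [Metric.uniformContinuousOn_iff] at h1
    exact h1 θ hθpos
  choose η hηpos hη using hUC
  set ηm : ℝ := Finset.univ.inf' Finset.univ_nonempty η with hηmdef
  have hηm : 0 < ηm := by
    obtain ⟨i1, _, h⟩ := Finset.exists_mem_eq_inf' Finset.univ_nonempty η
    rw [hηmdef, h]
    exact hηpos i1
  have hηm_le : ∀ i, ηm ≤ η i := fun i => Finset.inf'_le _ (Finset.mem_univ i)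
  have hβγtend : Filter.Tendsto (fun j => β (φ j)/γ) Filter.atTop (nhds 0) := by
    simpa using hβφ.div_const γ
  have hev5 : ∀ᶠ j in Filter.atTop, β (φ j)/γ < (min ηm (1/2))/D :=
    hβγtend.eventually_lt_const (by positivity)
  have hev6 : ∀ᶠ j in Filter.atTop, β (φ j) < 1 := hβφ.eventually_lt_const one_pos
  have hev7 : ∀ᶠ j in Filter.atTop, dist (x (φ j)) xstar < 1/2 :=
    hφt (Metric.ball_mem_nhds xstar (by norm_num))
  have hfail : ∀ᶠ j in Filter.atTop, ∃ i,
      σ * (β (φ j)/γ) * ⟪gradient (F i) (x (φ j)), d (φ j)⟫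
        < F i (x (φ j) + (β (φ j)/γ) • d (φ j)) - F i (x (φ j)) := by
    filter_upwards [hev6] with j h6
    rcases (hβ (φ j)).2.2.2 with h1 | h2
    · exact absurd h1 h6.ne
    · unfold ArmijoAt at h2
      push_neg at h2
      obtain ⟨i, hi⟩ := h2
      exact ⟨i, hi⟩
  have hpig : ∃ i, ∃ᶠ j in Filter.atTop,
      σ * (β (φ j)/γ) * ⟪gradient (F i) (x (φ j)), d (φ j)⟫
        < F i (x (φ j) + (β (φ j)/γ) • d (φ j)) - F i (x (φ j)) := by
    by_contra h
    push_neg at h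
    obtain ⟨j, hj1, hj2⟩ := ((Filter.eventually_all.2 h).and hfail).exists
    obtain ⟨i, hi⟩ := hj2
    linarith [hj1 i]
  obtain ⟨i, hfreq⟩ := hpig
  obtain ⟨j, hjP, hj3, hj5, hj7⟩ :=
    (hfreq.and_eventually (hev3.and (hev5.and hev7))).exists
  obtain ⟨hjd1, hjd2⟩ := hj3
  -- final contradiction
  set k := φ j with hkdef
  set t : ℝ := β k / γ with htdef
  have ht : 0 < t := div_pos (hβ k).1 hγ0
  obtain ⟨s, hs, heq⟩ := mvt_line (hF i) (x k) (d k) ht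
  set A : ℝ := ⟪gradient (F i) (x k), d k⟫ with hAdef
  set B : ℝ := ⟪gradient (F i) (x k + s • d k), d k⟫ with hBdef
  have hP : σ * t * A < t * B := by rw [← heq]; exact hjP
  have hQ : σ * A < B := by
    by_contra hc
    push_neg at hc
    have h1 : t * B ≤ t * (σ * A) := mul_le_mul_of_nonneg_left hc ht.le
    nlinarith
  have hA : A ≤ -δ := by
    have hk2 := key k i
    rw [← hAdef] at hk2
    rw [hδdef]
    nlinarith [hjd1, hδ₁, hαmin, hk2, mul_le_mul hjd1 hjd1 hδ₁.le (norm_nonneg (d k))]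
  -- distance estimates
  have htD : t * D < min ηm (1/2) := by
    rw [htdef]
    calc β k / γ * D < (min ηm (1/2))/D * D := by
          apply mul_lt_mul_of_pos_right hj5 hDpos
      _ = min ηm (1/2) := by field_simp
  have hsd : dist (x k + s • d k) (x k) < min ηm (1/2) := by
    rw [dist_eq_norm, add_sub_cancel_left, norm_smul, Real.norm_eq_abs, abs_of_pos hs.1]
    calc s * ‖d k‖ ≤ t * D := by
          apply mul_le_mul hs.2.le hjd2 (norm_nonneg _) ht.le
      _ < min ηm (1/2) := htD
  have hmem1 : x k ∈ Metric.closedBall xstar 1 := by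
    rw [Metric.mem_closedBall]
    linarith [hj7]
  have hmem2 : x k + s • d k ∈ Metric.closedBall xstar 1 := by
    rw [Metric.mem_closedBall]
    calc dist (x k + s • d k) xstar ≤ dist (x k + s • d k) (x k) + dist (x k) xstar :=
          dist_triangle _ _ _
      _ ≤ 1 := by
          have h1 : dist (x k + s • d k) (x k) < 1/2 :=
            lt_of_lt_of_le hsd (min_le_right _ _)
          linarith
  have hdistg : dist (gradient (F i) (x k + s • d k)) (gradient (F i) (x k)) < θ := by
    apply hη i _ hmem2 _ hmem1
    exact lt_of_lt_of_le (lt_of_lt_of_le hsd (min_le_left _ _)) (hηm_le i)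
  have hBA : B - A < θ * D := by
    have h1 : B - A = ⟪gradient (F i) (x k + s • d k) - gradient (F i) (x k), d k⟫ := by
      rw [hBdef, hAdef, inner_sub_left]
    have h2 : ⟪gradient (F i) (x k + s • d k) - gradient (F i) (x k), d k⟫
        ≤ ‖gradient (F i) (x k + s • d k) - gradient (F i) (x k)‖ * ‖d k‖ :=
      real_inner_le_norm _ _
    have h3 : ‖gradient (F i) (x k + s • d k) - gradient (F i) (x k)‖ < θ := by
      rw [← dist_eq_norm]; exact hdistg
    have h4 : ‖gradient (F i) (x k + s • d k) - gradient (F i) (x k)‖ * ‖d k‖ < θ * D := by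
      rcases eq_or_lt_of_le (norm_nonneg (d k)) with h | h
      · rw [← h]; simpa using mul_pos hθpos hDpos
      · calc _ ≤ ‖gradient (F i) (x k + s • d k) - gradient (F i) (x k)‖ * D := by
              apply mul_le_mul_of_nonneg_left hjd2 (norm_nonneg _)
          _ < θ * D := by apply mul_lt_mul_of_pos_right h3 hDpos
    rw [h1]
    exact lt_of_le_of_lt h2 h4
  have hθD : θ * D = (1-σ)*δ/2 := by
    rw [hθdef]
    field_simp
  have h1σ : 0 < 1 - σ := by linarith
  have hfinal : (1-σ)*δ ≤ B - A := by
    nlinarith [mul_le_mul_of_nonneg_left hA h1σ.le]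
  rw [hθD] at hBA
  nlinarith [mul_pos h1σ hδpos]
end
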